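/- arXiv:2403.17655 — 7 statements merged into one kernel-verified Lean document; each statement's English description precedes it below -/
import Mathlib

section
/- The function φ₀(x) = sin⁴(x)/x⁴ (extended continuously at 0) is in L¹ ∩ L² and its Fourier transform φ̂₀(t) = ∫_{-∞}^{∞} φ₀(x) e^{-itx} dx vanishes for all t with |t| > 4. -/
open MeasureTheory Real FourierTransform

noncomputable def sinc2 (x : ℝ) : ℝ := if x = 0 then 1 else Real.sin x ^ 2 / x ^ 2

/-- `φ₀(x) = sin⁴ x / x⁴`, extended by `1` at `x = 0`. -/
noncomputable def phi0 (x : ℝ) : ℝ := if x = 0 then 1 else (Real.sin x) ^ 4 / x ^ 4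

lemma sinc2_nonneg (x : ℝ) : 0 ≤ sinc2 x := by
  unfold sinc2; split
  · norm_num
  · positivity

lemma sinc2_le_one (x : ℝ) : sinc2 x ≤ 1 := by
  unfold sinc2; split
  · exact le_refl 1
  · rename_i h
    rw [div_le_one (by positivity)]
    exact Real.sin_sq_le_sq

lemma sinc2_le (x : ℝ) : sinc2 x ≤ 2 * (1 + x ^ 2)⁻¹ := by
  unfold sinc2; split
  · rename_i h
    subst h; norm_num
  · rename_i h
    rw [show (2:ℝ) * (1 + x ^ 2)⁻¹ = 2 / (1 + x ^ 2) by ring, div_le_div_iff₀ (by positivity) (by positivity)]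
    rcases le_or_gt (x ^ 2) 1 with hx | hx
    · nlinarith [Real.sin_sq_le_sq (x := x), sq_nonneg x, Real.sin_sq_le_one x]
    · nlinarith [Real.sin_sq_le_one x, sq_nonneg (Real.sin x)]

lemma phi0_eq (x : ℝ) : phi0 x = sinc2 x ^ 2 := by
  unfold phi0 sinc2; split
  · norm_num
  · rw [div_pow, ← pow_mul, ← pow_mul]

lemma measurable_sinc2 : Measurable sinc2 := by
  unfold sinc2
  exact Measurable.ite (measurableSet_singleton 0) measurable_const (by measurability)

lemma integrable_sinc2 : Integrable sinc2 := by
  refine ((integrable_inv_one_add_sq).const_mul 2).mono' measurable_sinc2.aestronglyMeasurable ?_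
  filter_upwards with x
  rw [Real.norm_eq_abs, abs_of_nonneg (sinc2_nonneg x)]
  exact sinc2_le x

lemma phi0_nonneg (x : ℝ) : 0 ≤ phi0 x := by rw [phi0_eq]; positivity

lemma phi0_le_sinc2 (x : ℝ) : phi0 x ≤ sinc2 x := by
  rw [phi0_eq]
  nlinarith [sinc2_le_one x, sinc2_nonneg x]

lemma measurable_phi0 : Measurable phi0 := by
  unfold phi0
  exact Measurable.ite (measurableSet_singleton 0) measurable_const (by measurability)

lemma integrable_phi0 : Integrable phi0 := by
  refine integrable_sinc2.mono' measurable_phi0.aestronglyMeasurable ?_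
  filter_upwards with x
  rw [Real.norm_eq_abs, abs_of_nonneg (phi0_nonneg x)]
  exact phi0_le_sinc2 x

lemma phi0_le_one (x : ℝ) : phi0 x ≤ 1 := by
  rw [phi0_eq]; nlinarith [sinc2_le_one x, sinc2_nonneg x]

lemma memLp_phi0 : MemLp phi0 2 := by
  rw [memLp_two_iff_integrable_sq measurable_phi0.aestronglyMeasurable]
  refine integrable_phi0.mono' ((measurable_phi0.pow_const 2).aestronglyMeasurable) ?_
  filter_upwards with x
  rw [Real.norm_eq_abs, abs_of_nonneg (by positivity)]
  nlinarith [phi0_le_one x, phi0_nonneg x]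

noncomputable def Tf (y : ℝ) : ℂ := ((π * max 0 (1 - π * |y|) : ℝ) : ℂ)

lemma Tf_cont : Continuous Tf := by
  apply Complex.continuous_ofReal.comp
  fun_prop

lemma Tf_eq_zero {y : ℝ} (h : 1/π ≤ |y|) : Tf y = 0 := by
  have hπ := Real.pi_pos
  have h1 : 1 - π * |y| ≤ 0 := by
    rw [div_le_iff₀ hπ] at h
    nlinarith
  simp [Tf, max_eq_left h1]

lemma Tf_integrable : Integrable Tf := by
  apply Tf_cont.integrable_of_hasCompactSupport
  apply HasCompactSupport.intro (isCompact_Icc (a := -(1/π)) (b := 1/π))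
  intro y hy
  apply Tf_eq_zero
  rw [Set.mem_Icc, ← abs_le] at hy
  exact le_of_not_ge hy

lemma aux_deriv (d p q : ℂ) (hd : d ≠ 0) (v : ℝ) :
    HasDerivAt (fun y : ℝ => Complex.exp (-(d*y)) * ((-q/d - p)/d + (-q/d) * y))
      (Complex.exp (-(d*v)) * (p + q * v)) v := by
  have h : ∀ z : ℂ, HasDerivAt (fun z : ℂ => Complex.exp (-(d*z)) * ((-q/d - p)/d + (-q/d) * z))
      (Complex.exp (-(d*z)) * (p + q * z)) z := by
    intro z
    have h1 : HasDerivAt (fun z : ℂ => -(d*z)) (-d) z := by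
      simpa using ((hasDerivAt_id z).const_mul (-d))
    have h2 := h1.cexp
    have h3 : HasDerivAt (fun z : ℂ => (-q/d - p)/d + (-q/d) * z) (-q/d) z := by
      simpa using ((hasDerivAt_id z).const_mul (-q/d)).const_add ((-q/d - p)/d)
    have h4 := h2.mul h3
    refine h4.congr_deriv ?_
    field_simp
    ring
  exact (h v).comp_ofReal

lemma aux_deriv0 (p q : ℂ) (v : ℝ) :
    HasDerivAt (fun y : ℝ => p * y + q * y^2/2) (p + q * v) v := by
  have h : ∀ z : ℂ, HasDerivAt (fun z : ℂ => p * z + q * z^2/2) (p + q * z) z := by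
    intro z
    have h1 : HasDerivAt (fun z : ℂ => p * z) p z := by
      simpa using (hasDerivAt_id z).const_mul p
    have h2 : HasDerivAt (fun z : ℂ => q * z^2/2) (q * z) z := by
      have := ((hasDerivAt_pow 2 z).const_mul q).div_const 2
      refine this.congr_deriv ?_
      ring
    exact h1.add h2
  exact (h v).comp_ofReal

lemma ft_Tf (x : ℝ) : 𝓕 Tf x = (sinc2 x : ℂ) := by
  have hπ := Real.pi_pos
  rw [Real.fourier_real_eq_integral_exp_smul]
  set f : ℝ → ℂ := fun v => Complex.exp (↑(-2 * π * v * x) * Complex.I) • Tf v with hf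
  have hsupp : Function.support f ⊆ Set.Ioc (-(1/π)) (1/π) := by
    intro v hv
    simp only [Function.mem_support] at hv
    have hT : Tf v ≠ 0 := fun h => hv (by simp [hf, h])
    have habs : |v| < 1/π := by
      by_contra h
      exact hT (Tf_eq_zero (le_of_not_gt h))
    have h2 := abs_lt.mp habs
    exact ⟨h2.1, h2.2.le⟩
  rw [← intervalIntegral.integral_eq_integral_of_support_subset hsupp]
  have hcont : Continuous f := by
    apply Continuous.fun_smul _ Tf_cont
    apply Complex.continuous_exp.comp
    fun_prop
  rw [← intervalIntegral.integral_add_adjacent_intervals (a := -(1/π)) (b := 0) (c := 1/π)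
    (hcont.intervalIntegrable _ _) (hcont.intervalIntegrable _ _)]
  have hL : ∀ v ∈ Set.uIcc (-(1/π)) 0, f v =
      Complex.exp (↑(-2 * π * v * x) * Complex.I) * ((π : ℂ) + (π:ℂ)^2 * v) := by
    intro v hv
    rw [Set.uIcc_of_le (neg_nonpos.mpr (by positivity)), Set.mem_Icc] at hv
    have h1 : |v| = -v := abs_of_nonpos hv.2
    have h2 : (0:ℝ) ≤ 1 - π * |v| := by
      rw [h1]
      have h3 : π * -v ≤ π * (1/π) := by gcongr; linarith [hv.1]
      rw [mul_one_div, div_self hπ.ne'] at h3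
      linarith
    have hmax : max 0 (1 - π * -v) = 1 - π * -v := max_eq_right (by rw [← h1]; exact h2)
    simp only [hf, Tf, h1, hmax, smul_eq_mul]
    push_cast
    ring
  have hR : ∀ v ∈ Set.uIcc 0 (1/π), f v =
      Complex.exp (↑(-2 * π * v * x) * Complex.I) * ((π : ℂ) - (π:ℂ)^2 * v) := by
    intro v hv
    rw [Set.uIcc_of_le (by positivity), Set.mem_Icc] at hv
    have h1 : |v| = v := abs_of_nonneg hv.1
    have h2 : (0:ℝ) ≤ 1 - π * |v| := by
      rw [h1]
      have h3 : π * v ≤ π * (1/π) := by gcongr; exact hv.2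
      rw [mul_one_div, div_self hπ.ne'] at h3
      linarith
    have hmax : max 0 (1 - π * v) = 1 - π * v := max_eq_right (by rw [← h1]; exact h2)
    simp only [hf, Tf, h1, hmax, smul_eq_mul]
    push_cast
    ring
  rw [intervalIntegral.integral_congr hL, intervalIntegral.integral_congr hR]
  rcases eq_or_ne x 0 with hx | hx
  · subst hx
    simp only [mul_zero, Complex.ofReal_zero, zero_mul, Complex.exp_zero, one_mul]
    rw [intervalIntegral.integral_eq_sub_of_hasDerivAt
        (fun v _ => aux_deriv0 (π:ℂ) ((π:ℂ)^2) v)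
        ((Continuous.intervalIntegrable (by fun_prop) _ _)),
      intervalIntegral.integral_eq_sub_of_hasDerivAt
        (fun v _ => by simpa [sub_eq_add_neg] using aux_deriv0 (π:ℂ) (-(π:ℂ)^2) v)
        ((Continuous.intervalIntegrable (by fun_prop) _ _))]
    have hπc : (π:ℂ) ≠ 0 := Complex.ofReal_ne_zero.mpr hπ.ne'
    simp only [sinc2, if_pos rfl]
    push_cast
    field_simp
    ring
  · set d : ℂ := (2 * π * x : ℝ) * Complex.I with hd
    have hdne : d ≠ 0 := by
      simp only [hd, mul_ne_zero_iff, Complex.ofReal_ne_zero]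
      exact ⟨⟨⟨two_ne_zero, hπ.ne'⟩, hx⟩, Complex.I_ne_zero⟩
    have key : ∀ v : ℝ, ∀ q : ℂ, Complex.exp (↑(-2 * π * v * x) * Complex.I) * ((π : ℂ) + q * v)
        = Complex.exp (-(d * v)) * ((π:ℂ) + q * v) := by
      intro v q
      congr 2
      rw [hd]
      push_cast
      ring
    have hcL : Set.EqOn (fun v : ℝ => Complex.exp (↑(-2 * π * v * x) * Complex.I) * ((π : ℂ) + (π:ℂ)^2 * v))
        (fun v : ℝ => Complex.exp (-(d * v)) * ((π : ℂ) + (π:ℂ)^2 * v)) (Set.uIcc (-(1/π)) 0) :=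
      fun v _ => key v ((π:ℂ)^2)
    have hcR : Set.EqOn (fun v : ℝ => Complex.exp (↑(-2 * π * v * x) * Complex.I) * ((π : ℂ) - (π:ℂ)^2 * v))
        (fun v : ℝ => Complex.exp (-(d * v)) * ((π : ℂ) + (-(π:ℂ)^2) * v)) (Set.uIcc 0 (1/π)) := by
      intro v _
      have := key v (-(π:ℂ)^2)
      simpa [sub_eq_add_neg, neg_mul] using this
    rw [intervalIntegral.integral_congr hcL, intervalIntegral.integral_congr hcR]
    rw [intervalIntegral.integral_eq_sub_of_hasDerivAt
        (fun v _ => aux_deriv d (π:ℂ) ((π:ℂ)^2) hdne v)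
        (Continuous.intervalIntegrable (by fun_prop) _ _),
      intervalIntegral.integral_eq_sub_of_hasDerivAt
        (fun v _ => aux_deriv d (π:ℂ) (-(π:ℂ)^2) hdne v)
        (Continuous.intervalIntegrable (by fun_prop) _ _)]
    have hπc : (π:ℂ) ≠ 0 := Complex.ofReal_ne_zero.mpr hπ.ne'
    have hxc : (x:ℂ) ≠ 0 := Complex.ofReal_ne_zero.mpr hx
    have h1 : -(d * ((-(1/π) : ℝ) : ℂ)) = ((2*x : ℝ) : ℂ) * Complex.I := by
      rw [hd]; push_cast; field_simp
    have h2 : -(d * ((1/π : ℝ) : ℂ)) = ((-(2*x) : ℝ) : ℂ) * Complex.I := by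
      rw [hd]; push_cast; field_simp
    have h3 : -(d * ((0:ℝ):ℂ)) = 0 := by simp
    rw [h1, h2, h3, Complex.exp_zero, Complex.exp_mul_I, Complex.exp_mul_I]
    simp only [sinc2, if_neg hx, hd]
    push_cast
    simp only [Complex.cos_neg, Complex.sin_neg]
    have hsq : Complex.sin (2*(x:ℂ)) ^ 2 + Complex.cos (2*(x:ℂ)) ^ 2 = 1 := Complex.sin_sq_add_cos_sq _
    have hct : Complex.cos (2*(x:ℂ)) = 2 * Complex.cos (x:ℂ) ^ 2 - 1 := Complex.cos_two_mul _
    have hst : Complex.sin (x:ℂ) ^ 2 + Complex.cos (x:ℂ) ^ 2 = 1 := Complex.sin_sq_add_cos_sq _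
    have hI : (Complex.I)^2 = -1 := Complex.I_sq
    have hc2 : Complex.cos ((x:ℂ)*2) = 1 - 2 * Complex.sin (x:ℂ)^2 := by
      rw [mul_comm, Complex.cos_two_mul]
      linear_combination 2*hst
    have hIne : Complex.I ≠ 0 := Complex.I_ne_zero
    have hI4 : Complex.I ^ 4 = 1 := by
      rw [show (4:ℕ) = 2*2 by rfl, pow_mul, hI]; norm_num
    field_simp
    ring_nf
    rw [hI, hc2]
    ring

lemma integrable_sinc2C : Integrable (fun x : ℝ => (sinc2 x : ℂ)) :=
  integrable_sinc2.ofReal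

lemma ft_Tf_int : Integrable (𝓕 Tf) := by
  have : 𝓕 Tf = fun x => (sinc2 x : ℂ) := funext ft_Tf
  rw [this]
  exact integrable_sinc2C

lemma ftft_Tf (v : ℝ) : 𝓕 (𝓕 Tf) v = Tf (-v) := by
  have hinv : 𝓕⁻ (𝓕 Tf) = Tf := Tf_cont.fourierInv_fourier_eq Tf_integrable ft_Tf_int
  have h := Real.fourierInv_eq_fourier_neg (𝓕 Tf) (-v)
  rw [neg_neg] at h
  rw [← h, hinv]

theorem stmt0 :
    Integrable phi0 ∧ MemLp phi0 2 ∧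
    ∀ t : ℝ, |t| > 4 →
      (∫ x : ℝ, (phi0 x : ℂ) * Complex.exp (-(Complex.I * (t : ℂ) * (x : ℂ)))) = 0 := by
  refine ⟨integrable_phi0, memLp_phi0, fun t ht => ?_⟩
  have hπ := Real.pi_pos
  set g : ℝ → ℂ := fun x => (sinc2 x : ℂ) * Complex.exp (-(Complex.I * t * x)) with hg
  have hg_meas : AEStronglyMeasurable g :=
    ((Complex.measurable_ofReal.comp measurable_sinc2).mul
      (Continuous.measurable (by fun_prop))).aestronglyMeasurable
  have hg_int : Integrable g := by
    refine integrable_sinc2C.norm.mono' hg_meas ?_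
    filter_upwards with x
    rw [hg]
    simp only [norm_mul, Complex.norm_exp]
    have : (-(Complex.I * t * x)).re = 0 := by simp
    rw [this, Real.exp_zero, mul_one]
  have hflip : (innerₗ ℝ).flip = innerₗ ℝ := by
    apply LinearMap.ext; intro x; apply LinearMap.ext; intro y
    exact real_inner_comm x y
  have hkey := VectorFourier.integral_fourierIntegral_smul_eq_flip
    (e := Real.fourierChar) (L := innerₗ ℝ) (μ := volume) (ν := volume)
    Real.continuous_fourierChar (by exact continuous_inner) Tf_integrable hg_int
  rw [hflip] at hkey
  have hLHS : (∫ x : ℝ, (phi0 x : ℂ) * Complex.exp (-(Complex.I * t * x)))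
      = ∫ ξ : ℝ, (VectorFourier.fourierIntegral 𝐞 volume (innerₗ ℝ) Tf ξ) • g ξ := by
    refine integral_congr_ae (Filter.Eventually.of_forall fun x => ?_)
    dsimp only
    have : VectorFourier.fourierIntegral 𝐞 volume (innerₗ ℝ) Tf x = 𝓕 Tf x := rfl
    rw [this, ft_Tf, smul_eq_mul, phi0_eq]
    push_cast
    ring
  have hFg : ∀ y : ℝ, VectorFourier.fourierIntegral 𝐞 volume (innerₗ ℝ) g y
      = Tf (-(y + t/(2*π))) := by
    intro y
    have hthis : VectorFourier.fourierIntegral 𝐞 volume (innerₗ ℝ) g y = 𝓕 g y := rfl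
    rw [hthis]
    have e1 : 𝓕 g y = 𝓕 (fun x : ℝ => (sinc2 x : ℂ)) (y + t/(2*π)) := by
      rw [Real.fourier_real_eq, Real.fourier_real_eq]
      refine integral_congr_ae (Filter.Eventually.of_forall fun x => ?_)
      dsimp only
      simp only [hg, Circle.smul_def, Real.fourierChar_apply, smul_eq_mul]
      rw [mul_comm ((sinc2 x : ℂ)) _, ← mul_assoc, ← Complex.exp_add]
      have hexp : (↑(2 * π * -(x * y)) : ℂ) * Complex.I + -(Complex.I * t * x)
          = (↑(2 * π * -(x * (y + t/(2*π)))) : ℂ) * Complex.I := by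
        have hπc : (π : ℂ) ≠ 0 := Complex.ofReal_ne_zero.mpr hπ.ne'
        push_cast
        field_simp
        ring
      rw [hexp]
    rw [e1]
    have e2 : 𝓕 (fun x : ℝ => (sinc2 x : ℂ)) = 𝓕 (𝓕 Tf) :=
      congrArg (fun f : ℝ → ℂ => 𝓕 f) (funext ft_Tf).symm
    rw [e2, ftft_Tf]
  have hRHS : (∫ x : ℝ, Tf x • VectorFourier.fourierIntegral 𝐞 volume (innerₗ ℝ) g x) = 0 := by
    have hzero : ∀ x : ℝ, Tf x • VectorFourier.fourierIntegral 𝐞 volume (innerₗ ℝ) g x = 0 := by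
      intro x
      rcases eq_or_ne (Tf x) 0 with h | h
      · rw [h, zero_smul]
      · have habs : |x| < 1/π := by
          by_contra hc
          exact h (Tf_eq_zero (le_of_not_gt hc))
        rw [hFg]
        have habs' : π * |x| < 1 := by
          rw [lt_div_iff₀ hπ] at habs
          linarith
        have hA : |t| / (2*π) ≤ |x + t/(2*π)| + |x| := by
          have e : |t| / (2*π) = |t/(2*π)| := by
            rw [abs_div, abs_of_pos (show (0:ℝ) < 2*π by positivity)]
          rw [e]
          calc |t/(2*π)| = |(x + t/(2*π)) + (-x)| := by ring_nf
          _ ≤ |x + t/(2*π)| + |(-x)| := abs_add_le _ _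
          _ = |x + t/(2*π)| + |x| := by rw [abs_neg]
        have hB : |t| ≤ (|x + t/(2*π)| + |x|) * (2*π) := by
          rwa [div_le_iff₀ (by positivity)] at hA
        have h5 : 1/π ≤ |(-(x + t/(2*π)))| := by
          rw [abs_neg, div_le_iff₀ hπ]
          nlinarith [hB, habs', ht, hπ]
        rw [Tf_eq_zero h5, smul_zero]
    rw [integral_congr_ae (Filter.Eventually.of_forall hzero)]
    exact integral_zero _ _
  rw [hLHS, hkey, hRHS]
end

section
/- ∫_{-∞}^{∞} sin⁴(x)/x⁴ dx = 2π/3. -/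
open MeasureTheory Real

namespace Phi0Aux

open Complex FourierTransform intervalIntegral

/-- The tent function. -/
noncomputable def T (t : ℝ) : ℝ := max (1 - |t|) 0
/-- Complex-valued tent function. -/
noncomputable def Tc (t : ℝ) : ℂ := (T t : ℂ)
/-- The squared sinc, the Fourier transform of the tent. -/
noncomputable def S (ξ : ℝ) : ℝ := if ξ = 0 then 1 else Real.sin (π*ξ)^2 / (π*ξ)^2

lemma contT : Continuous T := (continuous_const.sub _root_.continuous_abs).max continuous_const

lemma contTc : Continuous Tc := Complex.continuous_ofReal.comp contT

lemma suppT : HasCompactSupport T := by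
  apply HasCompactSupport.intro (isCompact_Icc (a := (-1:ℝ)) (b := 1))
  intro x hx
  simp only [Set.mem_Icc, not_and_or, not_le] at hx
  have : 1 - |x| ≤ 0 := by rcases hx with h | h <;> cases abs_cases x <;> linarith
  simp [T, max_eq_right this]

lemma intT : Integrable T := contT.integrable_of_hasCompactSupport suppT

lemma intTc : Integrable Tc := intT.ofReal (𝕜 := ℂ)

lemma Tzero {x : ℝ} (hx : 1 ≤ |x|) : T x = 0 := by
  simp [T, max_eq_right (by linarith : 1 - |x| ≤ 0)]

lemma Teq {x : ℝ} (hx : |x| ≤ 1) : T x = 1 - |x| := by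
  simp [T, max_eq_left (by linarith : (0:ℝ) ≤ 1 - |x|)]

lemma Teven (x : ℝ) : T (-x) = T x := by simp [T]

lemma expDeriv (d : ℂ) (t : ℝ) :
    HasDerivAt (fun t : ℝ => Complex.exp (-(d * t))) (-d * Complex.exp (-(d * t))) t := by
  have h1 : HasDerivAt (fun t : ℝ => (t : ℂ)) 1 t := Complex.ofRealCLM.hasDerivAt
  have h2 : HasDerivAt (fun t : ℝ => -(d * (t:ℂ))) (-d) t := by
    exact ((h1.const_mul d).neg).congr_deriv (by simp)
  simpa [mul_comm] using h2.cexp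

lemma piece1 (d : ℂ) (hd : d ≠ 0) :
    ∫ t in (0:ℝ)..1, (1 - (t:ℂ)) * Complex.exp (-(d * t)) =
      Complex.exp (-d)/d^2 + 1/d - 1/d^2 := by
  have key : ∀ t : ℝ, HasDerivAt
      (fun t : ℝ => -(1 - (t:ℂ)) * Complex.exp (-(d * t))/d + Complex.exp (-(d * t))/d^2)
      ((1 - (t:ℂ)) * Complex.exp (-(d * t))) t := by
    intro t
    have h1 : HasDerivAt (fun t : ℝ => -(1 - (t:ℂ))) 1 t := by
      exact (((Complex.ofRealCLM.hasDerivAt (x := t)).const_sub (1:ℂ)).neg).congr_deriv (by simp)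
    have := ((h1.mul (expDeriv d t)).div_const d).add ((expDeriv d t).div_const (d^2))
    refine this.congr_deriv (Eq.symm ?_)
    field_simp
    ring
  rw [intervalIntegral.integral_eq_sub_of_hasDerivAt (fun t _ => key t)]
  · push_cast
    simp
    field_simp
    ring
  · apply Continuous.intervalIntegrable
    fun_prop

lemma piece2 (d : ℂ) (hd : d ≠ 0) :
    ∫ t in (-1:ℝ)..0, (1 + (t:ℂ)) * Complex.exp (-(d * t)) =
      Complex.exp d/d^2 - 1/d - 1/d^2 := by
  have key : ∀ t : ℝ, HasDerivAt
      (fun t : ℝ => -(1 + (t:ℂ)) * Complex.exp (-(d * t))/d - Complex.exp (-(d * t))/d^2)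
      ((1 + (t:ℂ)) * Complex.exp (-(d * t))) t := by
    intro t
    have h1 : HasDerivAt (fun t : ℝ => -(1 + (t:ℂ))) (-1) t := by
      exact (((Complex.ofRealCLM.hasDerivAt (x := t)).const_add (1:ℂ)).neg).congr_deriv (by simp)
    have := ((h1.mul (expDeriv d t)).div_const d).sub ((expDeriv d t).div_const (d^2))
    refine this.congr_deriv (Eq.symm ?_)
    field_simp
    ring
  rw [intervalIntegral.integral_eq_sub_of_hasDerivAt (fun t _ => key t)]
  · push_cast
    simp
    field_simp
    ring
  · apply Continuous.intervalIntegrable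
    fun_prop

lemma fourier_split (ξ : ℝ) : 𝓕 Tc ξ =
    (∫ t in (-1:ℝ)..0, (1 + (t:ℂ)) * Complex.exp (-((2*π*ξ*Complex.I) * t)))
    + ∫ t in (0:ℝ)..1, (1 - (t:ℂ)) * Complex.exp (-((2*π*ξ*Complex.I) * t)) := by
  rw [Real.fourier_real_eq_integral_exp_smul]
  have hsupp : Function.support (fun v : ℝ => Complex.exp (↑(-2 * π * v * ξ) * Complex.I) • Tc v)
      ⊆ Set.Ioc (-1) 1 := by
    intro v hv
    by_contra hmem
    have h1 : 1 ≤ |v| := by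
      simp only [Set.mem_Ioc, not_and_or, not_lt, not_le] at hmem
      rcases hmem with h | h <;> cases abs_cases v <;> linarith
    simp [Function.mem_support, Tc, Tzero h1] at hv
  rw [← intervalIntegral.integral_eq_integral_of_support_subset hsupp]
  have hcont : Continuous fun v : ℝ => Complex.exp (↑(-2 * π * v * ξ) * Complex.I) • Tc v := by
    apply Continuous.smul (f := fun v : ℝ => Complex.exp (↑(-2 * π * v * ξ) * Complex.I)) (g := Tc)
    · fun_prop
    · exact contTc
  rw [← intervalIntegral.integral_add_adjacent_intervals (a := (-1:ℝ)) (b := 0) (c := 1)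
    (hcont.intervalIntegrable _ _) (hcont.intervalIntegrable _ _)]
  congr 1
  · apply intervalIntegral.integral_congr
    intro t ht
    rw [Set.uIcc_of_le (by norm_num)] at ht
    obtain ⟨h1, h2⟩ := ht
    have habs : |t| = -t := abs_of_nonpos h2
    have : T t = 1 + t := by rw [Teq (by rw [habs]; linarith)]; rw [habs]; ring
    simp only [smul_eq_mul, Tc, this]
    push_cast
    ring_nf
  · apply intervalIntegral.integral_congr
    intro t ht
    rw [Set.uIcc_of_le (by norm_num)] at ht
    obtain ⟨h1, h2⟩ := ht
    have habs : |t| = t := abs_of_nonneg h1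
    have : T t = 1 - t := by rw [Teq (by rw [habs]; linarith), habs]
    simp only [smul_eq_mul, Tc, this]
    push_cast
    ring_nf

lemma fourierTc (ξ : ℝ) : 𝓕 Tc ξ = (S ξ : ℂ) := by
  rw [fourier_split]
  by_cases hξ : ξ = 0
  · subst hξ
    have e1 : ∀ t : ℝ, (1 + (t:ℂ)) * Complex.exp (-((2*(π:ℂ)*(0:ℝ)*Complex.I) * t)) = ((1+t : ℝ):ℂ) := by
      intro t; push_cast; simp
    have e2 : ∀ t : ℝ, (1 - (t:ℂ)) * Complex.exp (-((2*(π:ℂ)*(0:ℝ)*Complex.I) * t)) = ((1-t : ℝ):ℂ) := by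
      intro t; push_cast; simp
    simp only [e1, e2, intervalIntegral.integral_ofReal]
    have i1 : (∫ t in (-1:ℝ)..0, (1+t)) = 1/2 := by
      rw [intervalIntegral.integral_add intervalIntegrable_const
        intervalIntegral.intervalIntegrable_id]
      simp
      norm_num
    have i2 : (∫ t in (0:ℝ)..1, (1-t)) = 1/2 := by
      rw [intervalIntegral.integral_sub intervalIntegrable_const
        intervalIntegral.intervalIntegrable_id]
      simp
      norm_num
    rw [i1, i2]
    norm_num [S]
  · have hπ := Real.pi_ne_zero
    have hd : (2*(π:ℂ)*ξ*Complex.I) ≠ 0 := by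
      simp only [ne_eq, mul_eq_zero, Complex.I_ne_zero, or_false]
      push_cast
      simp [hπ, hξ]
    rw [piece1 _ hd, piece2 _ hd]
    have ha : (2*π*ξ : ℝ) ≠ 0 := by
      simp [hπ, hξ]
    have h1 : (2*(π:ℂ)*ξ*Complex.I) = ((2*π*ξ : ℝ) : ℂ) * Complex.I := by push_cast; ring
    rw [h1, ← neg_mul, Complex.exp_mul_I, Complex.exp_mul_I, Complex.sin_neg, Complex.cos_neg]
    have hcos : Real.cos (2*π*ξ) = 1 - 2*Real.sin (π*ξ)^2 := by
      have h2 : 2*π*ξ = 2*(π*ξ) := by ring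
      rw [h2, Real.cos_two_mul, Real.cos_sq']
      ring
    rw [← Complex.ofReal_cos, ← Complex.ofReal_sin, hcos]
    have haC : ((2*π*ξ:ℝ):ℂ) ≠ 0 := Complex.ofReal_ne_zero.mpr ha
    have hπξ : ((π*ξ:ℝ)) ≠ 0 := by simp [hπ, hξ]
    simp only [S, hξ, if_false]
    have collect : ∀ (c s q r : ℂ), r ≠ 0 → q ≠ 0 →
        (c + s*Complex.I)/q - 1/r - 1/q + ((c + -s*Complex.I)/q + 1/r - 1/q) = (2*c - 2)/q := by
      intro c s q r hr hq
      field_simp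
      ring
    have hd' : ((2*π*ξ:ℝ):ℂ)*Complex.I ≠ 0 := by rw [← h1]; exact hd
    rw [collect _ _ _ _ hd' (pow_ne_zero 2 hd')]
    have hsq : (((2*π*ξ:ℝ):ℂ)*Complex.I)^2 = ((-(2*π*ξ)^2 : ℝ):ℂ) := by
      rw [mul_pow, Complex.I_sq]
      push_cast
      ring
    rw [hsq]
    have hb : ((-(2*π*ξ)^2 : ℝ) : ℂ) ≠ 0 :=
      Complex.ofReal_ne_zero.mpr (by simpa using pow_ne_zero 2 ha)
    have hc : ((π*ξ : ℝ) : ℂ) ≠ 0 := Complex.ofReal_ne_zero.mpr hπξ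
    push_cast
    push_cast at hb hc
    field_simp
    ring

lemma S_nonneg (ξ : ℝ) : 0 ≤ S ξ := by
  unfold S; split
  · norm_num
  · positivity

lemma S_le (ξ : ℝ) : S ξ ≤ 2 * (1 + ξ^2)⁻¹ := by
  have hπ : (1:ℝ) ≤ π^2 := by nlinarith [Real.pi_gt_three]
  unfold S; split
  · rename_i h; subst h; norm_num
  · rename_i h
    have h1 : Real.sin (π*ξ)^2 ≤ 1 := by
      nlinarith [Real.neg_one_le_sin (π*ξ), Real.sin_le_one (π*ξ)]
    have h2 : Real.sin (π*ξ)^2 ≤ (π*ξ)^2 := by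
      have hle := abs_sin_le_abs (x := π*ξ)
      calc Real.sin (π*ξ)^2 = |Real.sin (π*ξ)|^2 := (_root_.sq_abs _).symm
        _ ≤ |π*ξ|^2 := by gcongr
        _ = (π*ξ)^2 := _root_.sq_abs _
    have hd : (0:ℝ) < (π*ξ)^2 := by positivity
    have h3 : (0:ℝ) < 1 + ξ^2 := by positivity
    rw [div_le_iff₀ hd, show 2*(1+ξ^2)⁻¹*(π*ξ)^2 = (2*(π*ξ)^2)/(1+ξ^2) by field_simp,
      le_div_iff₀ h3]
    nlinarith [mul_le_mul_of_nonneg_right h1 (sq_nonneg ξ), sq_nonneg ξ,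
      mul_le_mul_of_nonneg_right hπ (sq_nonneg ξ)]

lemma S_meas : Measurable S := by
  unfold S
  exact Measurable.ite (measurableSet_eq_fun measurable_id measurable_const) measurable_const
    (by fun_prop)

lemma S_int : Integrable S := by
  apply (integrable_inv_one_add_sq.const_mul 2).mono' S_meas.aestronglyMeasurable
  filter_upwards with ξ
  rw [Real.norm_eq_abs, _root_.abs_of_nonneg (S_nonneg ξ)]
  exact S_le ξ

lemma flip_formula (f g : ℝ → ℂ) (hf : Integrable f) (hg : Integrable g) :
    ∫ ξ : ℝ, (𝓕 f ξ) • (g ξ) = ∫ x : ℝ, (f x) • (𝓕 g x) := by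
  have hL : Continuous fun p : ℝ × ℝ => (innerₗ ℝ) p.1 p.2 := continuous_inner
  have hflip : (innerₗ ℝ).flip = innerₗ ℝ := by
    apply LinearMap.ext; intro x; apply LinearMap.ext; intro y
    simp [real_inner_comm]
  have := VectorFourier.integral_fourierIntegral_smul_eq_flip (e := Real.fourierChar)
    (μ := (volume : Measure ℝ)) (ν := (volume : Measure ℝ)) (L := innerₗ ℝ)
    Real.continuous_fourierChar hL hf hg
  rw [hflip] at this
  exact this

lemma Tsq_integral : ∫ x : ℝ, (T x)^2 = 2/3 := by
  have hsupp : Function.support (fun v : ℝ => (T v)^2) ⊆ Set.Ioc (-1) 1 := by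
    intro v hv
    by_contra hmem
    have h1 : 1 ≤ |v| := by
      simp only [Set.mem_Ioc, not_and_or, not_lt, not_le] at hmem
      rcases hmem with h | h <;> cases abs_cases v <;> linarith
    simp [Function.mem_support, Tzero h1] at hv
  rw [← intervalIntegral.integral_eq_integral_of_support_subset hsupp]
  have hcont : Continuous fun v : ℝ => (T v)^2 := contT.pow 2
  rw [← intervalIntegral.integral_add_adjacent_intervals (a := (-1:ℝ)) (b := 0) (c := 1)
    (hcont.intervalIntegrable _ _) (hcont.intervalIntegrable _ _)]
  have e1 : (∫ t in (-1:ℝ)..0, (T t)^2) = ∫ t in (-1:ℝ)..0, (1+t)^2 := by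
    apply intervalIntegral.integral_congr
    intro t ht
    rw [Set.uIcc_of_le (by norm_num)] at ht
    obtain ⟨h1, h2⟩ := ht
    have habs : |t| = -t := abs_of_nonpos h2
    show T t^2 = (1+t)^2
    rw [Teq (by rw [habs]; linarith), habs]
    ring
  have e2 : (∫ t in (0:ℝ)..1, (T t)^2) = ∫ t in (0:ℝ)..1, (1-t)^2 := by
    apply intervalIntegral.integral_congr
    intro t ht
    rw [Set.uIcc_of_le (by norm_num)] at ht
    obtain ⟨h1, h2⟩ := ht
    have habs : |t| = t := abs_of_nonneg h1
    show T t^2 = (1-t)^2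
    rw [Teq (by rw [habs]; linarith), habs]
  have k1 : ∀ t : ℝ, HasDerivAt (fun t : ℝ => (1+t)^3/3) ((1+t)^2) t := by
    intro t
    have := (((hasDerivAt_id t).const_add 1).pow 3).div_const 3
    simp only [id_eq] at this
    refine this.congr_deriv (Eq.symm ?_)
    ring
  have k2 : ∀ t : ℝ, HasDerivAt (fun t : ℝ => -(1-t)^3/3) ((1-t)^2) t := by
    intro t
    have := ((((hasDerivAt_id t).const_sub 1).pow 3).neg).div_const 3
    simp only [id_eq] at this
    refine this.congr_deriv (Eq.symm ?_)
    ring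
  rw [e1, e2,
    intervalIntegral.integral_eq_sub_of_hasDerivAt (fun t _ => k1 t)
      ((by fun_prop : Continuous fun t : ℝ => (1+t)^2).intervalIntegrable _ _),
    intervalIntegral.integral_eq_sub_of_hasDerivAt (fun t _ => k2 t)
      ((by fun_prop : Continuous fun t : ℝ => (1-t)^2).intervalIntegrable _ _)]
  norm_num

lemma Ssq_integral : ∫ ξ : ℝ, (S ξ)^2 = 2/3 := by
  have hS : 𝓕 Tc = fun ξ => (S ξ : ℂ) := funext fourierTc
  have hSint : Integrable (fun ξ : ℝ => (S ξ : ℂ)) := S_int.ofReal (𝕜 := ℂ)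
  have hFint : Integrable (𝓕 Tc) := by rw [hS]; exact hSint
  have hinv : 𝓕⁻ (𝓕 Tc) = Tc := contTc.fourierInv_fourier_eq intTc hFint
  have key := flip_formula Tc (𝓕 Tc) intTc hFint
  have hRHS : ∀ x : ℝ, 𝓕 (𝓕 Tc) x = Tc x := by
    intro x
    have := Real.fourierInv_eq_fourier_neg (𝓕 Tc) (-x)
    rw [neg_neg, hinv] at this
    rw [← this, Tc, Tc, Teven]
  have main : ((∫ ξ : ℝ, (S ξ)^2 : ℝ) : ℂ) = ((2/3 : ℝ) : ℂ) := by
    calc ((∫ ξ : ℝ, (S ξ)^2 : ℝ) : ℂ)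
        = ∫ ξ : ℝ, (((S ξ)^2 : ℝ) : ℂ) := (Complex.ofRealLI.integral_comp_comm (fun ξ => (S ξ)^2)).symm
      _ = ∫ ξ : ℝ, (𝓕 Tc ξ) • (𝓕 Tc ξ) := by
          apply MeasureTheory.integral_congr_ae
          filter_upwards with ξ
          rw [hS]
          simp only [smul_eq_mul]
          push_cast
          ring
      _ = ∫ x : ℝ, Tc x • 𝓕 (𝓕 Tc) x := key
      _ = ∫ x : ℝ, (((T x)^2 : ℝ) : ℂ) := by
          apply MeasureTheory.integral_congr_ae
          filter_upwards with x
          rw [hRHS x]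
          simp only [smul_eq_mul, Tc]
          push_cast
          ring
      _ = ((∫ x : ℝ, (T x)^2 : ℝ) : ℂ) := Complex.ofRealLI.integral_comp_comm (fun x => (T x)^2)
      _ = ((2/3 : ℝ) : ℂ) := by rw [Tsq_integral]
  exact_mod_cast main

lemma Ssq_eq_phi0 (ξ : ℝ) : (S ξ)^2 = phi0 (π * ξ) := by
  by_cases hξ : ξ = 0
  · subst hξ; simp [S, phi0]
  · have hπξ : π * ξ ≠ 0 := by simp [Real.pi_ne_zero, hξ]
    simp only [S, phi0, hξ, hπξ, if_false]
    rw [div_pow, ← pow_mul, ← pow_mul]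

end Phi0Aux

theorem stmt2 : (∫ x : ℝ, phi0 x) = 2 * π / 3 := by
  have h1 : ∫ ξ : ℝ, phi0 (π * ξ) = 2/3 := by
    rw [← MeasureTheory.integral_congr_ae (Filter.Eventually.of_forall Phi0Aux.Ssq_eq_phi0)]
    exact Phi0Aux.Ssq_integral
  rw [MeasureTheory.Measure.integral_comp_mul_left (fun x => phi0 x) π] at h1
  rw [smul_eq_mul] at h1
  have hπ : |π⁻¹| = π⁻¹ := abs_of_pos (by positivity)
  rw [hπ] at h1
  have hπ0 : (π:ℝ) ≠ 0 := Real.pi_ne_zero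
  field_simp at h1 ⊢
  linarith
end

section
/- Let S : [0,∞) → ℝ be measurable with S(x) + Mx non-decreasing for some constant M > 0, and suppose the improper integral ∫_0^∞ e^{-σx} S(x) dx converges for every σ > 0. Then for every σ > 0 there exists X such that S(x) ≤ e^{σx} for all x ≥ X. -/
open MeasureTheory Real Filter

theorem stmt4 (S : ℝ → ℝ) (M : ℝ) (hM : 0 < M)
    (hmeas : Measurable S)
    (hmono : MonotoneOn (fun x => S x + M * x) (Set.Ici 0))
    (hconv : ∀ σ : ℝ, 0 < σ → ∃ L : ℝ,
      Tendsto (fun T : ℝ => ∫ x in (0:ℝ)..T, Real.exp (-σ * x) * S x) atTop (nhds L)) :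
    ∀ σ : ℝ, 0 < σ → ∃ X : ℝ, ∀ x : ℝ, X ≤ x → S x ≤ Real.exp (σ * x) := by
  intro σ hσ
  by_contra hcon
  push_neg at hcon
  have hσ2 : 0 < σ / 2 := by linarith
  obtain ⟨L, hL⟩ := hconv (σ / 2) hσ2
  -- integrability on subintervals of [0,∞)
  have hint : ∀ a b : ℝ, 0 ≤ a → a ≤ b →
      IntervalIntegrable (fun x => Real.exp (-(σ/2) * x) * S x) volume a b := by
    intro a b ha hab
    have hsub : Set.uIcc a b ⊆ Set.Ici 0 := by
      rw [Set.uIcc_of_le hab]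
      intro x hx
      exact le_trans ha hx.1
    have hg : IntervalIntegrable (fun x => S x + M * x) volume a b :=
      (hmono.mono hsub).intervalIntegrable
    have hlin : IntervalIntegrable (fun x => M * x) volume a b :=
      (continuous_const.mul continuous_id).intervalIntegrable a b
    have hS : IntervalIntegrable S volume a b := by
      have := hg.sub hlin
      simpa using this
    exact hS.continuousOn_mul ((Real.continuous_exp.comp
      (continuous_const.mul continuous_id)).continuousOn)
  -- chunks tend to 0
  set F : ℝ → ℝ := fun T => ∫ x in (0:ℝ)..T, Real.exp (-(σ/2) * x) * S x with hF
  have hL' : Tendsto F atTop (nhds L) := by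
    convert hL using 2
  have hshift : Tendsto (fun T => F (T + 1)) atTop (nhds L) :=
    hL'.comp (tendsto_atTop_add_const_right atTop 1 tendsto_id)
  have hchunk0 : Tendsto (fun T => F (T + 1) - F T) atTop (nhds 0) := by
    have := hshift.sub hL'
    simpa using this
  have hev1 : ∀ᶠ T in atTop, F (T + 1) - F T < 1 :=
    (hchunk0.eventually (eventually_lt_nhds zero_lt_one (a := (0:ℝ))))
  -- growth condition eventually
  have hgrow : Tendsto (fun x : ℝ => Real.exp (σ/2 * x - σ/2)) atTop atTop :=
    Real.tendsto_exp_atTop.comp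
      (tendsto_atTop_add_const_right atTop (-(σ/2))
        (tendsto_id.const_mul_atTop hσ2))
  have hev2 : ∀ᶠ x : ℝ in atTop, Real.exp (σ/2 * x - σ/2) ≥ M + 1 :=
    hgrow.eventually_ge_atTop (M + 1)
  have hev3 : ∀ᶠ x : ℝ in atTop, Real.exp (σ * x) ≥ M + 1 :=
    (Real.tendsto_exp_atTop.comp (tendsto_id.const_mul_atTop hσ)).eventually_ge_atTop (M+1)
  have hev4 : ∀ᶠ x : ℝ in atTop, (0:ℝ) ≤ x := eventually_ge_atTop 0
  obtain ⟨X1, hX1⟩ := (((hev1.and hev2).and hev3).and hev4).exists_forall_of_atTop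
  obtain ⟨x0, hx0X, hx0S⟩ := hcon X1
  obtain ⟨⟨⟨h1, h2⟩, h3⟩, h4⟩ := hX1 x0 hx0X
  -- lower bound on chunk at x0
  have hx0 : 0 ≤ x0 := h4
  set c : ℝ := Real.exp (-(σ/2) * (x0 + 1)) * (S x0 - M) with hc
  have hSpos : Real.exp (σ * x0) - M ≥ 1 := by linarith
  have hSx0 : S x0 - M ≥ 1 := by nlinarith [hx0S]
  have hlow : ∀ x ∈ Set.Icc x0 (x0 + 1), c ≤ Real.exp (-(σ/2) * x) * S x := by
    intro x hx
    have hxIci : x0 ≤ x := hx.1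
    have hxle : x ≤ x0 + 1 := hx.2
    have hmon := hmono (Set.mem_Ici.mpr hx0) (Set.mem_Ici.mpr (le_trans hx0 hxIci)) hxIci
    simp only at hmon
    have hSlb : S x0 - M ≤ S x := by nlinarith
    have hexp : Real.exp (-(σ/2) * (x0 + 1)) ≤ Real.exp (-(σ/2) * x) := by
      apply Real.exp_le_exp.mpr
      nlinarith
    have h0 : (0:ℝ) ≤ S x0 - M := by linarith
    calc c ≤ Real.exp (-(σ/2) * x) * (S x0 - M) :=
            mul_le_mul_of_nonneg_right hexp h0
      _ ≤ Real.exp (-(σ/2) * x) * S x :=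
            mul_le_mul_of_nonneg_left hSlb (Real.exp_nonneg _)
  have hia : IntervalIntegrable (fun x => Real.exp (-(σ/2) * x) * S x) volume x0 (x0 + 1) :=
    hint x0 (x0 + 1) hx0 (by linarith)
  have hIge : c ≤ ∫ x in x0..(x0+1), Real.exp (-(σ/2) * x) * S x := by
    have := intervalIntegral.integral_mono_on (by linarith : x0 ≤ x0 + 1)
      (intervalIntegrable_const (c := c)) hia hlow
    simp only [intervalIntegral.integral_const, smul_eq_mul] at this
    linarith
  -- chunk equals F (x0+1) - F x0
  have hsplit : F x0 + (∫ x in x0..(x0+1), Real.exp (-(σ/2) * x) * S x) = F (x0 + 1) :=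
    intervalIntegral.integral_add_adjacent_intervals
      (hint 0 x0 le_rfl hx0) hia
  have hchunklt : (∫ x in x0..(x0+1), Real.exp (-(σ/2) * x) * S x) < 1 := by
    have := h1
    linarith
  -- c ≥ 1
  have hc1 : 1 ≤ c := by
    have he : Real.exp (-(σ/2) * (x0 + 1)) * Real.exp (σ * x0)
        = Real.exp (σ/2 * x0 - σ/2) := by
      rw [← Real.exp_add]; ring_nf
    have hcge : Real.exp (-(σ/2) * (x0 + 1)) * (Real.exp (σ * x0) - M) ≤ c := by
      apply mul_le_mul_of_nonneg_left _ (Real.exp_nonneg _)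
      linarith [hx0S]
    have : Real.exp (-(σ/2) * (x0 + 1)) * (Real.exp (σ * x0) - M)
        = Real.exp (σ/2 * x0 - σ/2) - M * Real.exp (-(σ/2) * (x0 + 1)) := by
      rw [mul_sub, he]; ring
    have hexple : Real.exp (-(σ/2) * (x0 + 1)) ≤ 1 := by
      apply Real.exp_le_one_iff.mpr
      nlinarith
    nlinarith [Real.exp_nonneg (-(σ/2) * (x0 + 1))]
  linarith
end

section
/- Let S : [0,∞) → ℝ satisfy the hypotheses of the one-sided Ingham–Karamata theorem (S(x)+Mx non-decreasing, Laplace transform L{S;s} convergent for Re s > 0 with continuous extension to Re s = 0), extend S by 0 on (-∞,0), and let φ ∈ L¹ ∩ L² be real-valued with Fourier transform supported in [-R,R]. Then lim_{h→∞} ∫_{-∞}^{∞} S(x+h) φ(x) dx = 0. -/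
open MeasureTheory Real Filter

open scoped FourierTransform

section Aux

variable {S : ℝ → ℝ} {M : ℝ}

lemma meas_S (hS0 : ∀ x : ℝ, x < 0 → S x = 0)
    (hmono : MonotoneOn (fun x => S x + M * x) (Set.Ici 0)) : Measurable S := by
  have hg : Monotone (fun x : ℝ => S (max x 0) + M * max x 0) := by
    intro a b hab
    exact hmono (Set.mem_Ici.2 (le_max_right _ _)) (Set.mem_Ici.2 (le_max_right _ _))
      (max_le_max hab le_rfl)
  have hgm : Measurable fun x : ℝ => S (max x 0) + M * max x 0 := hg.measurable
  have hS : S = fun x : ℝ => if 0 ≤ x then (S (max x 0) + M * max x 0) - M * x else 0 := by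
    funext x
    by_cases hx : 0 ≤ x
    · simp only [hx, if_true, max_eq_left hx]
      ring
    · simp [hx, hS0 x (lt_of_not_ge hx)]
  rw [hS]
  exact Measurable.ite measurableSet_Ici (hgm.sub (measurable_const.mul measurable_id))
    measurable_const

lemma loc_bound (hmono : MonotoneOn (fun x => S x + M * x) (Set.Ici 0)) (hM : 0 ≤ M)
    {T : ℝ} (hT : 0 ≤ T) :
    ∀ x ∈ Set.Icc (0:ℝ) T, |S x| ≤ |S 0| + |S T + M * T| + M * T := by
  intro x hx
  have h1 : S 0 + M * 0 ≤ S x + M * x := hmono (Set.mem_Ici.2 le_rfl) hx.1 hx.1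
  have h2 : S x + M * x ≤ S T + M * T := hmono hx.1 (Set.mem_Ici.2 hT) hx.2
  have h3 : |S x + M * x| ≤ |S 0| + |S T + M * T| := by
    rw [abs_le]
    constructor
    · nlinarith [abs_nonneg (S T + M * T), neg_abs_le (S 0)]
    · nlinarith [abs_nonneg (S 0), le_abs_self (S T + M * T)]
  have h4 : |S x| ≤ |S x + M * x| + M * x := by
    have h := abs_add_le (S x + M * x) (-(M * x))
    rw [abs_neg, abs_of_nonneg (show (0:ℝ) ≤ M * x by nlinarith [hx.1])] at h
    simpa using h
  nlinarith [hx.2, hx.1]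

lemma II_aux (hS0 : ∀ x : ℝ, x < 0 → S x = 0)
    (hmono : MonotoneOn (fun x => S x + M * x) (Set.Ici 0)) (hM : 0 ≤ M)
    {b : ℝ} {a c : ℝ} (ha : 0 ≤ a) (hac : a ≤ c) :
    IntervalIntegrable (fun x => rexp (-b * x) * S x) volume a c := by
  rw [intervalIntegrable_iff_integrableOn_Ioc_of_le hac]
  have hbd : ∀ x ∈ Set.Ioc a c,
      ‖rexp (-b * x) * S x‖ ≤ rexp (|b| * c) * (|S 0| + |S c + M * c| + M * c) := by
    intro x hx
    have hx0 : 0 ≤ x := le_trans ha hx.1.le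
    have h1 : |S x| ≤ |S 0| + |S c + M * c| + M * c :=
      loc_bound hmono hM (le_trans ha hac) x ⟨hx0, hx.2⟩
    have h2 : rexp (-b * x) ≤ rexp (|b| * c) := by
      apply Real.exp_le_exp.2
      calc -b * x ≤ |b| * x := by nlinarith [neg_abs_le b, abs_nonneg b]
        _ ≤ |b| * c := by nlinarith [abs_nonneg b, hx.2]
    rw [norm_mul, Real.norm_eq_abs, Real.norm_eq_abs, abs_of_pos (Real.exp_pos _)]
    have h3 : (0:ℝ) ≤ |S x| := abs_nonneg _
    exact mul_le_mul h2 h1 h3 (Real.exp_pos _).le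
  apply Integrable.mono' (g := fun _ => rexp (|b| * c) * (|S 0| + |S c + M * c| + M * c)) (integrableOn_const measure_Ioc_lt_top.ne)
  · exact ((measurable_exp.comp (measurable_const.mul measurable_id)).mul
      (meas_S hS0 hmono)).aestronglyMeasurable
  · exact (ae_restrict_iff' measurableSet_Ioc).2 (Filter.Eventually.of_forall hbd)

lemma growth_bound (hM : 0 < M) (hS0 : ∀ x : ℝ, x < 0 → S x = 0)
    (hmono : MonotoneOn (fun x => S x + M * x) (Set.Ici 0)) {b ℓ : ℝ} (hb : 0 < b)
    (hcv : Tendsto (fun T : ℝ => ∫ x in (0:ℝ)..T, rexp (-b * x) * S x) atTop (nhds ℓ)) :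
    ∃ C : ℝ, 0 < C ∧ ∀ x : ℝ, |S x| ≤ C * rexp (2 * b * x) := by
  set v : ℝ → ℝ := fun T => ∫ x in (0:ℝ)..T, rexp (-b * x) * S x with hv
  have hD : Tendsto (fun T => v (T + 1) - v T) atTop (nhds 0) := by
    have h1 : Tendsto (fun T => v (T + 1)) atTop (nhds ℓ) :=
      hcv.comp (tendsto_atTop_add_const_right _ 1 tendsto_id)
    simpa using h1.sub hcv
  obtain ⟨T₀, hT₀⟩ := (Metric.tendsto_atTop.1 hD 1 (by norm_num))
  set T₁ : ℝ := max T₀ 0 with hT₁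
  have hT₁0 : 0 ≤ T₁ := le_max_right _ _
  -- main upper bound for T ≥ T₁
  have hup : ∀ T ≥ T₁, S T ≤ M + rexp b * rexp (b * T) := by
    intro T hT
    have hT0 : 0 ≤ T := le_trans hT₁0 hT
    by_cases hc : S T - M ≤ 0
    · nlinarith [Real.exp_pos b, Real.exp_pos (b * T), mul_pos (Real.exp_pos b) (Real.exp_pos (b*T))]
    push_neg at hc
    have hDT : |v (T + 1) - v T| < 1 := by
      have := hT₀ T (le_trans (le_max_left _ _) hT)
      rwa [Real.dist_eq, sub_zero] at this
    have hint1 : IntervalIntegrable (fun x => rexp (-b * x) * S x) volume T (T+1) :=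
      II_aux hS0 hmono hM.le hT0 (by linarith)
    have hseg : v (T + 1) - v T = ∫ x in T..(T+1), rexp (-b * x) * S x := by
      have h0T : IntervalIntegrable (fun x => rexp (-b * x) * S x) volume 0 T :=
        II_aux hS0 hmono hM.le le_rfl hT0
      have := intervalIntegral.integral_add_adjacent_intervals h0T hint1
      rw [hv]
      dsimp only
      linarith [this]
    have hlow : ∀ x ∈ Set.Icc T (T+1), rexp (-b * (T+1)) * (S T - M) ≤ rexp (-b * x) * S x := by
      intro x hx
      have hSx : S T - M ≤ S x := by
        have h := hmono (Set.mem_Ici.2 hT0) (Set.mem_Ici.2 (le_trans hT0 hx.1)) hx.1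
        dsimp only at h
        nlinarith [hx.2]
      have he : rexp (-b * (T+1)) ≤ rexp (-b * x) := by
        apply Real.exp_le_exp.2; nlinarith [hx.2]
      have := mul_le_mul he hSx hc.le (Real.exp_pos _).le
      linarith
    have hmono_int : rexp (-b * (T+1)) * (S T - M) ≤ v (T+1) - v T := by
      rw [hseg]
      have hconst : IntervalIntegrable (fun _ : ℝ => rexp (-b * (T+1)) * (S T - M)) volume T (T+1) :=
        intervalIntegrable_const
      calc rexp (-b * (T+1)) * (S T - M)
          = ∫ _ in T..(T+1), rexp (-b * (T+1)) * (S T - M) := by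
            rw [intervalIntegral.integral_const]; simp
        _ ≤ ∫ x in T..(T+1), rexp (-b * x) * S x :=
            intervalIntegral.integral_mono_on (by linarith) hconst hint1 hlow
    have : S T - M ≤ rexp (b * (T+1)) := by
      have hpos : 0 < rexp (-b * (T+1)) := Real.exp_pos _
      have h2 : rexp (-b * (T+1)) * (S T - M) ≤ 1 := le_trans hmono_int (by
        calc v (T+1) - v T ≤ |v (T+1) - v T| := le_abs_self _
          _ ≤ 1 := hDT.le)
      have h4 : S T - M ≤ 1 / rexp (-b * (T+1)) := by
        rw [le_div_iff₀ hpos]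
        nlinarith [h2]
      have h5 : (1:ℝ) / rexp (-b * (T+1)) = rexp (b * (T+1)) := by
        rw [one_div, ← Real.exp_neg]
        congr 1
        ring
      linarith
    have hee : rexp (b * (T+1)) = rexp b * rexp (b * T) := by
      rw [← Real.exp_add]; ring_nf
    nlinarith [this]
  -- now assemble
  set B : ℝ := |S 0| + |S T₁ + M * T₁| + M * T₁ with hB
  have hBnn : 0 ≤ B := by
    have : 0 ≤ M * T₁ := mul_nonneg hM.le hT₁0
    positivity
  refine ⟨M + rexp b + |S 0| + M / (2 * b) + B + 1, by positivity, ?_⟩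
  intro x
  set C : ℝ := M + rexp b + |S 0| + M / (2 * b) + B + 1 with hC
  have hexp1 : ∀ y : ℝ, 0 ≤ y → (1:ℝ) ≤ rexp (2 * b * y) := by
    intro y hy
    rw [← Real.exp_zero]
    exact Real.exp_le_exp.2 (by nlinarith)
  rcases lt_or_ge x 0 with hx | hx
  · rw [hS0 x hx, abs_zero]
    positivity
  rcases le_or_gt x T₁ with hxT | hxT
  · have h1 : |S x| ≤ B := loc_bound hmono hM.le hT₁0 x ⟨hx, hxT⟩
    have h2 := hexp1 x hx
    have hC1 : B ≤ C := by
      have h3 : 0 ≤ M / (2*b) := by positivity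
      have := Real.exp_pos b
      have := abs_nonneg (S 0)
      rw [hC]; linarith
    calc |S x| ≤ B := h1
      _ = B * 1 := by ring
      _ ≤ C * rexp (2*b*x) := by
          apply mul_le_mul hC1 h2 (by norm_num) (by positivity)
  · -- x ≥ T₁
    have hx0 : 0 ≤ x := le_trans hT₁0 hxT.le
    have hu := hup x hxT.le
    have hl : -(|S 0| + M * x) ≤ S x := by
      have h := hmono (Set.mem_Ici.2 le_rfl) (Set.mem_Ici.2 hx0) hx0
      dsimp only at h
      nlinarith [neg_abs_le (S 0)]
    rw [abs_le]
    have hebx : rexp (b * x) ≤ rexp (2 * b * x) := Real.exp_le_exp.2 (by nlinarith)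
    have he1 := hexp1 x hx0
    have hMx : M * x ≤ M / (2*b) * rexp (2*b*x) := by
      have h2 : 2*b*x ≤ rexp (2*b*x) := by
        have := Real.add_one_le_exp (2*b*x); linarith
      calc M * x = M / (2*b) * (2*b*x) := by field_simp
        _ ≤ M / (2*b) * rexp (2*b*x) := by
            apply mul_le_mul_of_nonneg_left h2 (by positivity)
    constructor
    · have : -(C * rexp (2*b*x)) ≤ -(|S 0| + M * x) := by
        have h4 : |S 0| = |S 0| * 1 := by ring
        have h5 : |S 0| * 1 ≤ |S 0| * rexp (2*b*x) :=
          mul_le_mul_of_nonneg_left he1 (abs_nonneg _)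
        have hBpos : 0 ≤ B * rexp (2*b*x) := by positivity
        have : |S 0| + M * x ≤ C * rexp (2*b*x) := by
          have h6 : (M + rexp b + 1) * rexp (2*b*x) ≥ 0 := by positivity
          rw [hC]; nlinarith
        linarith
      linarith
    · have h7 : rexp b * rexp (b*x) ≤ rexp b * rexp (2*b*x) :=
        mul_le_mul_of_nonneg_left hebx (Real.exp_pos b).le
      have h8 : M ≤ M * rexp (2*b*x) := by
        nlinarith [he1]
      have h9 : 0 ≤ (|S 0| + M/(2*b) + B + 1) * rexp (2*b*x) := by positivity
      rw [hC]
      nlinarith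

end Aux

section P2
open Complex SchwartzMap
open scoped RealInnerProductSpace

section Aux2

noncomputable def toSchwartz (g : ℝ → ℂ) (hg : ContDiff ℝ (⊤ : ℕ∞) g)
    (hsupp : HasCompactSupport g) : SchwartzMap ℝ ℂ where
  toFun := g
  smooth' := hg
  decay' := by
    intro k n
    have h1 : Continuous fun x : ℝ => ‖x‖ ^ k * ‖iteratedFDeriv ℝ n g x‖ :=
      ((continuous_norm).pow k).mul
        (hg.continuous_iteratedFDeriv (by exact_mod_cast le_top)).norm
    have h2 : HasCompactSupport fun x : ℝ => ‖x‖ ^ k * ‖iteratedFDeriv ℝ n g x‖ :=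
      HasCompactSupport.mul_left ((hsupp.iteratedFDeriv n).norm)
    obtain ⟨C, hC⟩ := h1.bounded_above_of_compact_support h2
    exact ⟨C, fun x => le_trans (le_abs_self _) (hC x)⟩

lemma flip_innerl : (innerₗ ℝ).flip = innerₗ ℝ := by
  apply LinearMap.ext; intro x; apply LinearMap.ext; intro y
  simp only [LinearMap.flip_apply, innerₗ_apply_apply]
  exact real_inner_comm x y

lemma continuous_innerl : Continuous fun p : ℝ × ℝ => (innerₗ ℝ) p.1 p.2 := by
  simp only [innerₗ_apply_apply]
  exact continuous_inner

/-- multiplication formula on ℝ -/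
lemma parseval_L1 {f g : ℝ → ℂ} (hf : Integrable f) (hg : Integrable g) :
    ∫ ξ : ℝ, 𝓕 f ξ * g ξ = ∫ x : ℝ, f x * 𝓕 g x := by
  have h := VectorFourier.integral_fourierIntegral_smul_eq_flip
    (e := Real.fourierChar) (L := innerₗ ℝ) (μ := volume) (ν := volume) (f := f) (g := g)
    Real.continuous_fourierChar continuous_innerl hf hg
  rw [flip_innerl] at h
  simp only [smul_eq_mul] at h
  exact h

lemma real_inner_mul (v w : ℝ) : ⟪v, w⟫ = v * w := by
  simp [RCLike.inner_apply, mul_comm]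

lemma fourierInv_real_eq (f : ℝ → ℂ) (w : ℝ) :
    𝓕⁻ f w = ∫ v : ℝ, Complex.exp (↑(2 * π * (v * w)) * Complex.I) * f v := by
  rw [Real.fourierInv_eq']
  simp only [real_inner_mul, smul_eq_mul]

lemma continuous_fourier {f : ℝ → ℂ} (hf : Integrable f) : Continuous (𝓕 f) :=
  VectorFourier.fourierIntegral_continuous Real.continuous_fourierChar continuous_innerl hf

lemma continuous_fourierInv {f : ℝ → ℂ} (hf : Integrable f) : Continuous (𝓕⁻ f) := by
  rw [Real.fourierInv_eq_fourier_comp_neg]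
  exact continuous_fourier (hf.comp_neg)

lemma ae_fourier_inversion {f : ℝ → ℂ} (hf : Integrable f) (hf' : Integrable (𝓕 f)) :
    f =ᵐ[volume] 𝓕⁻ (𝓕 f) := by
  set K := 𝓕 f with hK
  have hKc : Continuous K := continuous_fourier hf
  apply ae_eq_of_integral_contDiff_smul_eq hf.locallyIntegrable
    ((continuous_fourierInv hf').locallyIntegrable)
  intro g hgd hgs
  set gc : ℝ → ℂ := fun x => (g x : ℂ) with hgc
  have hgcc : Continuous gc := Complex.continuous_ofReal.comp hgd.continuous
  have hgcd : ContDiff ℝ (⊤ : ℕ∞) gc := Complex.ofRealCLM.contDiff.comp hgd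
  have hgcs : HasCompactSupport gc := hgs.comp_left (g := fun r : ℝ => (r : ℂ)) rfl
  set w : SchwartzMap ℝ ℂ := toSchwartz gc hgcd hgcs with hw
  set u : SchwartzMap ℝ ℂ := (FourierTransform.fourierCLE ℂ 𝓢(ℝ, ℂ)).symm w with hu
  have hgci : Integrable gc := w.integrable
  have hFu : 𝓕 ⇑u = gc := by
    have h1 : (FourierTransform.fourierCLE ℂ 𝓢(ℝ, ℂ)) u = w := (FourierTransform.fourierCLE ℂ 𝓢(ℝ, ℂ)).apply_symm_apply w
    calc 𝓕 ⇑u = ⇑((FourierTransform.fourierCLE ℂ 𝓢(ℝ, ℂ)) u) := rfl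
      _ = ⇑w := by rw [h1]
      _ = gc := rfl
  have hsmul : ∀ (F : ℝ → ℂ), (fun x => g x • F x) = fun x => gc x * F x := by
    intro F; funext x; rw [Complex.real_smul]
  rw [hsmul f, hsmul (𝓕⁻ K)]
  have hL : ∫ x : ℝ, gc x * f x = ∫ v : ℝ, u v * K v := by
    rw [← hFu, parseval_L1 u.integrable hf]
  rw [hL]
  -- RHS computation
  set Q : ℝ → ℝ → ℂ := fun x v => gc x * (Complex.exp (↑(2 * π * (v * x)) * Complex.I) * K v)
    with hQ
  have hQint : Integrable (Function.uncurry Q) (volume.prod volume) := by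
    apply Integrable.mono' ((hgci.norm.mul_prod hf'.norm))
    · apply Continuous.aestronglyMeasurable
      apply (hgcc.comp continuous_fst).mul
      apply Continuous.mul
      · apply Complex.continuous_exp.comp
        apply Continuous.mul _ continuous_const
        exact Complex.continuous_ofReal.comp
          (continuous_const.mul (continuous_snd.mul continuous_fst))
      · exact hKc.comp continuous_snd
    · apply Filter.Eventually.of_forall
      rintro ⟨x, v⟩
      simp only [Function.uncurry_apply_pair, hQ, norm_mul]
      rw [Complex.norm_exp_ofReal_mul_I, one_mul]
  have hstep1 : ∫ x : ℝ, gc x * 𝓕⁻ K x = ∫ x : ℝ, ∫ v : ℝ, Q x v := by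
    congr 1; funext x
    rw [fourierInv_real_eq, ← integral_const_mul]
  have hstep3 : ∀ v : ℝ, ∫ x : ℝ, Q x v = u v * K v := by
    intro v
    have e1 : (fun x => Q x v) =
        fun x => (Complex.exp (↑(2 * π * (x * v)) * Complex.I) * gc x) * K v := by
      funext x
      simp only [hQ]
      rw [mul_comm v x]
      ring
    rw [e1, integral_mul_const]
    have e2 : ∫ x : ℝ, Complex.exp (↑(2 * π * (x * v)) * Complex.I) * gc x = 𝓕⁻ gc v := by
      rw [fourierInv_real_eq]
    rw [e2]
    have e3 : 𝓕⁻ gc v = u v := by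
      rw [← hFu]
      exact u.integrable.fourierInv_fourier_eq (by rw [hFu]; exact hgci) u.continuous.continuousAt
    rw [e3]
  rw [hstep1, integral_integral_swap hQint]
  simp_rw [hstep3]

end Aux2
end P2


section P3
open Complex

section Aux3

variable {S : ℝ → ℝ} {M : ℝ} {L : ℂ → ℂ}

lemma real_conv (hconv : ∀ s : ℂ, 0 < s.re →
      Tendsto (fun T : ℝ => ∫ x in (0:ℝ)..T, Complex.exp (-s * x) * (S x : ℂ))
        atTop (nhds (L s))) {b : ℝ} (hb : 0 < b) :
    Tendsto (fun T : ℝ => ∫ x in (0:ℝ)..T, rexp (-b * x) * S x) atTop (nhds (L b).re) := by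
  have h1 := hconv (b : ℂ) (by simpa using hb)
  have h2 : ∀ T : ℝ, (∫ x in (0:ℝ)..T, Complex.exp (-(b:ℂ) * x) * (S x : ℂ))
      = ((∫ x in (0:ℝ)..T, rexp (-b * x) * S x : ℝ) : ℂ) := by
    intro T
    rw [← intervalIntegral.integral_ofReal]
    apply intervalIntegral.integral_congr
    intro x _
    push_cast [Complex.ofReal_exp]
    ring_nf
  have h3 : Tendsto (fun T : ℝ =>
      ((∫ x in (0:ℝ)..T, rexp (-b * x) * S x : ℝ) : ℂ)) atTop (nhds (L b)) := by
    simp only [← h2]; exact h1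
  have h4 := (Complex.continuous_re.tendsto _).comp h3
  simpa [Function.comp_def] using h4

/-- exponential growth bound, from the convergence hypothesis -/
lemma expS_bound (hM : 0 < M) (hS0 : ∀ x : ℝ, x < 0 → S x = 0)
    (hmono : MonotoneOn (fun x => S x + M * x) (Set.Ici 0))
    (hconv : ∀ s : ℂ, 0 < s.re →
      Tendsto (fun T : ℝ => ∫ x in (0:ℝ)..T, Complex.exp (-s * x) * (S x : ℂ))
        atTop (nhds (L s))) {σ : ℝ} (hσ : 0 < σ) :
    ∃ C : ℝ, 0 < C ∧ ∀ x : ℝ, |S x| ≤ C * rexp (σ * x) := by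
  obtain ⟨C, hC, hCb⟩ := growth_bound hM hS0 hmono (b := σ/2) (by linarith)
    (real_conv hconv (by linarith))
  exact ⟨C, hC, fun x => by have := hCb x; rwa [show 2 * (σ/2) = σ by ring] at this⟩

lemma integrable_expS (hS0 : ∀ x : ℝ, x < 0 → S x = 0) (hSm : Measurable S)
    {σ C : ℝ} (hσ : 0 < σ) (hC : 0 < C) (hCb : ∀ x : ℝ, |S x| ≤ C * rexp ((σ/2) * x)) :
    Integrable (fun y => rexp (-σ * y) * S y) := by
  have hmeas : Measurable fun y => rexp (-σ * y) * S y :=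
    (Real.measurable_exp.comp (measurable_const.mul measurable_id)).mul hSm
  have h1 : IntegrableOn (fun y => rexp (-σ * y) * S y) (Set.Iio 0) := by
    apply (integrableOn_zero (ε' := ℝ)).congr_fun ?_ measurableSet_Iio
    intro x hx
    simp [hS0 x hx]
  have h2 : IntegrableOn (fun y => rexp (-σ * y) * S y) (Set.Ici 0) := by
    rw [integrableOn_Ici_iff_integrableOn_Ioi]
    apply Integrable.mono' ((exp_neg_integrableOn_Ioi 0 (show (0:ℝ) < σ/2 by linarith)).const_mul C)
    · exact hmeas.aestronglyMeasurable.restrict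
    · apply (ae_restrict_iff' measurableSet_Ioi).2 (Filter.Eventually.of_forall ?_)
      intro x hx
      have hxx : (0:ℝ) < x := hx
      rw [Real.norm_eq_abs, abs_mul, abs_of_pos (Real.exp_pos _)]
      calc rexp (-σ * x) * |S x| ≤ rexp (-σ * x) * (C * rexp ((σ/2) * x)) := by
            apply mul_le_mul_of_nonneg_left (hCb x) (Real.exp_pos _).le
        _ = C * rexp (-(σ/2) * x) := by
            rw [mul_comm (rexp (-σ * x)), mul_assoc, ← Real.exp_add]
            congr 2
            ring
  have := h1.union h2
  rwa [Set.Iio_union_Ici, integrableOn_univ] at this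

/-- Full-line Laplace/Fourier representation -/
lemma laplace_rep (hS0 : ∀ x : ℝ, x < 0 → S x = 0) (hSm : Measurable S)
    {σ C : ℝ} (hσ : 0 < σ) (hC : 0 < C) (hCb : ∀ x : ℝ, |S x| ≤ C * rexp ((σ/2) * x))
    (hconv : ∀ s : ℂ, 0 < s.re →
      Tendsto (fun T : ℝ => ∫ x in (0:ℝ)..T, Complex.exp (-s * x) * (S x : ℂ))
        atTop (nhds (L s))) (τ : ℝ) :
    ∫ x : ℝ, ((rexp (-σ * x) * S x : ℝ) : ℂ) * Complex.exp (↑(τ * x) * Complex.I)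
      = L (σ - τ * Complex.I) := by
  set f : ℝ → ℂ := fun x => ((rexp (-σ * x) * S x : ℝ) : ℂ) * Complex.exp (↑(τ * x) * Complex.I)
    with hf
  have hre : (0:ℝ) < ((σ : ℂ) - τ * Complex.I).re := by simp [hσ]
  have hfeq : ∀ x : ℝ, f x = Complex.exp (-((σ:ℂ) - τ * Complex.I) * x) * (S x : ℂ) := by
    intro x
    rw [hf]
    push_cast [Complex.ofReal_exp]
    rw [mul_right_comm, ← Complex.exp_add]
    congr 2
    ring
  have hfint : Integrable f := by
    have hri : Integrable (fun y => rexp (-σ * y) * S y) := integrable_expS hS0 hSm hσ hC hCb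
    apply (hri.norm.const_mul 1).mono'
    · apply AEStronglyMeasurable.mul
      · exact (Complex.measurable_ofReal.comp
          ((Real.measurable_exp.comp (measurable_const.mul measurable_id)).mul hSm)).aestronglyMeasurable
      · exact (Complex.continuous_exp.comp
          ((Complex.continuous_ofReal.comp (continuous_const.mul continuous_id)).mul
            continuous_const)).aestronglyMeasurable
    · apply Filter.Eventually.of_forall
      intro x
      rw [hf]
      simp only [norm_mul, Complex.norm_real, Complex.norm_exp_ofReal_mul_I, mul_one, one_mul]
      simp [Real.norm_eq_abs]
  have hsupp : ∀ x : ℝ, x ∉ Set.Ici (0:ℝ) → f x = 0 := by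
    intro x hx
    rw [hfeq x, hS0 x (by simpa using hx)]
    simp
  have h1 : ∫ x : ℝ, f x = ∫ x in Set.Ioi (0:ℝ), f x := by
    rw [← setIntegral_eq_integral_of_forall_compl_eq_zero hsupp, integral_Ici_eq_integral_Ioi]
  have h2 : Tendsto (fun T : ℝ => ∫ x in (0:ℝ)..T, f x) atTop (nhds (∫ x in Set.Ioi (0:ℝ), f x)) :=
    intervalIntegral_tendsto_integral_Ioi 0 (hfint.integrableOn) tendsto_id
  have h3 : Tendsto (fun T : ℝ => ∫ x in (0:ℝ)..T, f x) atTop (nhds (L ((σ:ℂ) - τ * Complex.I))) := by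
    have h4 := hconv ((σ:ℂ) - τ * Complex.I) hre
    apply h4.congr
    intro T
    apply intervalIntegral.integral_congr
    intro x _
    rw [hfeq x]
  have := tendsto_nhds_unique h2 h3
  rw [h1, this]

end Aux3
end P3


section P4
open Complex

section Aux4
variable {S : ℝ → ℝ} {L : ℂ → ℂ}

lemma key_rep (hS0 : ∀ x : ℝ, x < 0 → S x = 0) (hSm : Measurable S)
    {σ C : ℝ} (hσ : 0 < σ) (hC : 0 < C) (hCb : ∀ x : ℝ, |S x| ≤ C * rexp ((σ/2) * x))
    (hconv : ∀ s : ℂ, 0 < s.re →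
      Tendsto (fun T : ℝ => ∫ x in (0:ℝ)..T, Complex.exp (-s * x) * (S x : ℂ))
        atTop (nhds (L s)))
    (K : ℝ → ℂ) (hKcont : Continuous K) (hKint : Integrable K) (h : ℝ) :
    ∫ y : ℝ, ((rexp (-σ * y) * S y : ℝ) : ℂ) * (𝓕⁻ K) (y - h)
      = ∫ v : ℝ, (K v * Complex.exp (↑(-(2 * π * (v * h))) * Complex.I))
          * L (↑σ - ↑(2 * π * v) * Complex.I) := by
  set g1 : ℝ → ℂ := fun y => ((rexp (-σ * y) * S y : ℝ) : ℂ) with hg1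
  have hg1m : Measurable g1 := Complex.measurable_ofReal.comp
    ((Real.measurable_exp.comp (measurable_const.mul measurable_id)).mul hSm)
  have hg1i : Integrable g1 := (integrable_expS hS0 hSm hσ hC hCb).ofReal
  set Q : ℝ → ℝ → ℂ :=
    fun y v => g1 y * (Complex.exp (↑(2 * π * (v * (y - h))) * Complex.I) * K v) with hQ
  have hQint : Integrable (Function.uncurry Q) (volume.prod volume) := by
    apply Integrable.mono' (hg1i.norm.mul_prod hKint.norm)
    · apply AEStronglyMeasurable.mul
      · exact (hg1m.comp measurable_fst).aestronglyMeasurable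
      · apply Continuous.aestronglyMeasurable
        apply Continuous.mul _ (hKcont.comp continuous_snd)
        apply Complex.continuous_exp.comp
        apply Continuous.mul _ continuous_const
        exact Complex.continuous_ofReal.comp
          (continuous_const.mul (continuous_snd.mul (continuous_fst.sub continuous_const)))
    · apply Filter.Eventually.of_forall
      rintro ⟨y, v⟩
      simp only [Function.uncurry_apply_pair, hQ, norm_mul, Complex.norm_exp_ofReal_mul_I, one_mul]
      exact le_refl _
  have hstep1 : ∫ y : ℝ, g1 y * (𝓕⁻ K) (y - h) = ∫ y : ℝ, ∫ v : ℝ, Q y v := by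
    congr 1
    funext y
    rw [fourierInv_real_eq K (y - h), ← integral_const_mul]
  have hinner : ∀ v : ℝ, ∫ y : ℝ, Q y v
      = (K v * Complex.exp (↑(-(2 * π * (v * h))) * Complex.I))
          * L (↑σ - ↑(2 * π * v) * Complex.I) := by
    intro v
    have hsplit : (fun y => Q y v) = fun y =>
        (g1 y * Complex.exp (↑((2 * π * v) * y) * Complex.I))
          * (Complex.exp (↑(-(2 * π * (v * h))) * Complex.I) * K v) := by
      funext y
      simp only [hQ]
      rw [show (↑(2 * π * (v * (y - h))) * Complex.I : ℂ)
          = ↑((2 * π * v) * y) * Complex.I + ↑(-(2 * π * (v * h))) * Complex.I by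
        push_cast; ring]
      rw [Complex.exp_add]
      ring
    rw [hsplit, integral_mul_const, laplace_rep hS0 hSm hσ hC hCb hconv (2 * π * v)]
    ring
  rw [hstep1, integral_integral_swap hQint]
  congr 1
  funext v
  exact hinner v

end Aux4
end P4



section P5
open Complex

/-- The averaged (Wiener-type) convergence step in the proof of the
one-sided Ingham–Karamata theorem. -/
theorem stmt6 (S : ℝ → ℝ) (M : ℝ) (hM : 0 < M)
    (hS0 : ∀ x : ℝ, x < 0 → S x = 0)
    (hmono : MonotoneOn (fun x => S x + M * x) (Set.Ici 0))
    (L : ℂ → ℂ)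
    (hconv : ∀ s : ℂ, 0 < s.re →
      Tendsto (fun T : ℝ => ∫ x in (0:ℝ)..T, Complex.exp (-s * x) * (S x : ℂ))
        atTop (nhds (L s)))
    (G : ℂ → ℂ) (hG : ContinuousOn G {s : ℂ | 0 ≤ s.re})
    (hGL : ∀ s : ℂ, 0 < s.re → G s = L s)
    (φ : ℝ → ℝ) (hφ1 : Integrable φ) (hφ2 : MemLp φ 2) (R : ℝ)
    (hφhat : ∀ t : ℝ, |t| > R →
      (∫ x : ℝ, (φ x : ℂ) * Complex.exp (-(Complex.I * (t : ℂ) * (x : ℂ)))) = 0) :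
    Tendsto (fun h : ℝ => ∫ x : ℝ, S (x + h) * φ x) atTop (nhds 0) := by
  have hπ : (0:ℝ) < π := Real.pi_pos
  have hSm : Measurable S := meas_S hS0 hmono
  set φc : ℝ → ℂ := fun x => (φ x : ℂ) with hφcdef
  have hφci : Integrable φc := hφ1.ofReal
  set K : ℝ → ℂ := 𝓕 φc with hKdef
  have hKcont : Continuous K := continuous_fourier hφci
  set r : ℝ := (max R 0) / (2 * π) with hrdef
  have hr0 : 0 ≤ r := by positivity
  -- support of K
  have hK0 : ∀ ξ : ℝ, r < |ξ| → K ξ = 0 := by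
    intro ξ hξ
    have h2 : |2 * π * ξ| > R := by
      rw [abs_mul, abs_of_pos (by positivity : (0:ℝ) < 2*π)]
      have h3 : max R 0 < 2 * π * |ξ| := by
        calc max R 0 = (max R 0)/(2*π) * (2*π) := by field_simp
          _ < |ξ| * (2*π) := by
              apply mul_lt_mul_of_pos_right _ (by positivity)
              rw [← hrdef]; exact hξ
          _ = 2*π*|ξ| := by ring
      exact lt_of_le_of_lt (le_max_left _ _) h3
    have h3 := hφhat (2 * π * ξ) h2
    rw [hKdef, Real.fourier_real_eq_integral_exp_smul, ← h3]
    congr 1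
    funext x
    rw [smul_eq_mul, mul_comm]
    congr 1
    push_cast
    ring
  have hKsupp : HasCompactSupport K := by
    apply HasCompactSupport.intro (isCompact_Icc (a := -r) (b := r))
    intro ξ hξ
    apply hK0
    rcases lt_or_ge r |ξ| with h | h
    · exact h
    · exfalso; exact hξ (abs_le.1 h)
  have hKint : Integrable K := hKcont.integrable_of_hasCompactSupport hKsupp
  have hinv : φc =ᵐ[volume] 𝓕⁻ K := ae_fourier_inversion hφci hKint
  -- bound for G on a compact set
  set Vc : Set ℂ := (fun p : ℝ × ℝ => (p.1 : ℂ) + (p.2 : ℂ) * Complex.I) ''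
    (Set.Icc 0 1 ×ˢ Set.Icc (-(2*π*r)) (2*π*r)) with hVc
  have hVcomp : IsCompact Vc :=
    (isCompact_Icc.prod isCompact_Icc).image
      ((Complex.continuous_ofReal.comp continuous_fst).add
        ((Complex.continuous_ofReal.comp continuous_snd).mul continuous_const))
  have hVsub : Vc ⊆ {s : ℂ | 0 ≤ s.re} := by
    rintro z ⟨⟨a, b⟩, ⟨ha, _⟩, rfl⟩
    simp only [Set.mem_setOf_eq, Complex.add_re, Complex.ofReal_re, Complex.mul_re,
      Complex.ofReal_im, Complex.I_re, Complex.I_im]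
    simp only [Set.mem_Icc] at ha
    nlinarith [ha.1]
  obtain ⟨CG, hCG⟩ := hVcomp.exists_bound_of_continuousOn (hG.mono hVsub)
  have hCG0 : 0 ≤ CG := by
    have h0 : (0:ℂ) ∈ Vc := ⟨(0, 0), by
      constructor
      · constructor
        · simp [Set.mem_Icc]
        · simp [Set.mem_Icc]; positivity
      · simp⟩
    exact le_trans (norm_nonneg _) (hCG 0 h0)
  have hmemV : ∀ (σ : ℝ), 0 < σ → σ ≤ 1 → ∀ (v : ℝ), |v| ≤ r →
      (↑σ - ↑(2 * π * v) * Complex.I) ∈ Vc := by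
    intro σ h1 h2 v hv
    refine ⟨(σ, -(2*π*v)), ⟨Set.mem_Icc.2 ⟨h1.le, h2⟩, Set.mem_Icc.2 ?_⟩, ?_⟩
    · rw [abs_le] at hv
      dsimp only
      constructor <;> nlinarith [hπ, hv.1, hv.2]
    · push_cast
      ring
  -- the Riemann-Lebesgue function
  set k : ℝ → ℂ := fun v => K v * G (↑(-(2*π*v)) * Complex.I) with hkdef
  have hkG : Continuous fun v : ℝ => G (↑(-(2*π*v)) * Complex.I) := by
    apply hG.comp_continuous
      ((Complex.continuous_ofReal.comp (continuous_const.mul continuous_id).neg).mul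
        continuous_const)
    intro v
    simp [Complex.mul_re]
  have hkcont : Continuous k := hKcont.mul hkG
  have hksupp : HasCompactSupport k := hKsupp.mul_right
  have hkint : Integrable k := hkcont.integrable_of_hasCompactSupport hksupp
  have hRL0 : Tendsto (𝓕 k) (cocompact ℝ) (nhds 0) := Real.zero_at_infty_fourier k
  have hRL1 : Tendsto (𝓕 k) atTop (nhds 0) := by
    apply hRL0.mono_left
    rw [cocompact_eq_atBot_atTop]
    exact le_sup_right
  have hRL : Tendsto (fun h : ℝ => ‖𝓕 k h‖) atTop (nhds 0) := by
    have := hRL1.norm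
    simpa using this
  -- squeeze
  apply squeeze_zero_norm _ hRL
  intro h
  by_cases Hint : Integrable (fun x => S (x + h) * φ x)
  swap
  · rw [integral_undef Hint]
    simp
  -- main equality
  have hEq : ((∫ x : ℝ, S (x + h) * φ x : ℝ) : ℂ) = 𝓕 k h := by
    -- translation
    have htr : ∫ x : ℝ, S (x + h) * φ x = ∫ y : ℝ, S y * φ (y - h) := by
      have h1 := MeasureTheory.integral_add_right_eq_self (μ := volume) (fun y => S y * φ (y - h)) h
      simp only [add_sub_cancel_right] at h1
      exact h1
    have hint' : Integrable (fun y => S y * φ (y - h)) := by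
      have h1 := Hint.comp_sub_right h
      simp only [sub_add_cancel] at h1
      exact h1
    -- sequence of regularizations
    set σs : ℕ → ℝ := fun n => 1 / (n + 1) with hσs
    have hσpos : ∀ n, 0 < σs n := fun n => by positivity
    have hσle1 : ∀ n, σs n ≤ 1 := by
      intro n
      rw [hσs]
      rw [div_le_one (by positivity)]
      simp
    have hσ0 : Tendsto σs atTop (nhds 0) := tendsto_one_div_add_atTop_nhds_zero_nat
    -- bounds
    have hCb : ∀ n : ℕ, ∃ C : ℝ, 0 < C ∧ ∀ x : ℝ, |S x| ≤ C * rexp ((σs n / 2) * x) :=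
      fun n => expS_bound hM hS0 hmono hconv (by have := hσpos n; positivity)
    set Fn : ℕ → ℝ → ℂ := fun n y => ((rexp (-(σs n) * y) * S y : ℝ) : ℂ) * φc (y - h) with hFn
    -- DCT 1 : to the actual integral
    have hDCT1 : Tendsto (fun n => ∫ y : ℝ, Fn n y) atTop
        (nhds ((∫ x : ℝ, S (x + h) * φ x : ℝ) : ℂ)) := by
      have hφm : AEStronglyMeasurable (fun y : ℝ => φc (y - h)) volume :=
        (hφci.comp_sub_right h).1
      have hlim : ((∫ x : ℝ, S (x + h) * φ x : ℝ) : ℂ) = ∫ y : ℝ, (S y : ℂ) * φc (y - h) := by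
        rw [htr]
        have hpt : ∀ y : ℝ, (S y : ℂ) * φc (y - h) = ((S y * φ (y - h) : ℝ) : ℂ) := by
          intro y; push_cast; ring
        simp only [hpt]
        exact (integral_ofReal (𝕜 := ℂ)).symm
      rw [hlim]
      apply tendsto_integral_of_dominated_convergence (fun y => |S y * φ (y - h)|)
      · intro n
        apply AEStronglyMeasurable.mul _ hφm
        exact (Complex.measurable_ofReal.comp
          ((Real.measurable_exp.comp (measurable_const.mul measurable_id)).mul
            hSm)).aestronglyMeasurable
      · exact hint'.abs
      · intro n
        apply Filter.Eventually.of_forall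
        intro y
        simp only [hFn, norm_mul, Complex.norm_real, Real.norm_eq_abs, abs_mul]
        rcases lt_or_ge y 0 with hy | hy
        · rw [hS0 y hy]
          simp
        · have h1 : rexp (-(σs n) * y) ≤ 1 := by
            rw [← Real.exp_zero]
            apply Real.exp_le_exp.2
            nlinarith [hσpos n]
          have h2 : |rexp (-(σs n) * y)| ≤ 1 := by
            rw [abs_of_pos (Real.exp_pos _)]; exact h1
          rw [Complex.norm_real, Real.norm_eq_abs]
          calc |rexp (-(σs n) * y)| * |S y| * |φ (y - h)|
              ≤ 1 * |S y| * |φ (y - h)| := by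
                apply mul_le_mul_of_nonneg_right _ (abs_nonneg _)
                apply mul_le_mul_of_nonneg_right h2 (abs_nonneg _)
            _ = |S y| * |φ (y - h)| := by ring
      · apply Filter.Eventually.of_forall
        intro y
        have h1 : Tendsto (fun n => rexp (-(σs n) * y)) atTop (nhds 1) := by
          have h2 : Tendsto (fun n => -(σs n) * y) atTop (nhds 0) := by
            have := (hσ0.neg).mul_const y
            simpa using this
          have := (Real.continuous_exp.tendsto 0).comp h2
          simpa [Function.comp_def] using this
        have h3 : Tendsto (fun n => ((rexp (-(σs n) * y) * S y : ℝ) : ℂ)) atTop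
            (nhds ((S y : ℝ) : ℂ)) := by
          apply Complex.continuous_ofReal.continuousAt.tendsto.comp
          have := h1.mul_const (S y)
          simpa using this
        exact h3.mul_const _
    -- DCT 2 : to the Fourier transform of k
    set In : ℕ → ℂ := fun n => ∫ v : ℝ, (K v * Complex.exp (↑(-(2 * π * (v * h))) * Complex.I))
        * G (↑(σs n) - ↑(2 * π * v) * Complex.I) with hIn
    have hrepn : ∀ n, ∫ y : ℝ, Fn n y = In n := by
      intro n
      obtain ⟨C, hC, hCb'⟩ := hCb n
      have haeq : (fun y : ℝ => φc (y - h)) =ᵐ[volume] (fun y : ℝ => (𝓕⁻ K) (y - h)) := by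
        have hqmp := (measurePreserving_sub_right volume h).quasiMeasurePreserving
        exact hqmp.ae_eq_comp hinv  -- maybe name differs
      have h1 : ∫ y : ℝ, Fn n y = ∫ y : ℝ, ((rexp (-(σs n) * y) * S y : ℝ) : ℂ) * (𝓕⁻ K) (y - h) := by
        apply integral_congr_ae
        exact EventuallyEq.mul (EventuallyEq.refl _ _) haeq
      rw [h1, key_rep hS0 hSm (hσpos n) hC hCb' hconv K hKcont hKint h, hIn]
      apply integral_congr_ae
      apply Filter.EventuallyEq.of_eq
      funext v
      rw [hGL _ (by simp [hσpos n])]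
    have hDCT2 : Tendsto (fun n => ∫ y : ℝ, Fn n y) atTop (nhds (𝓕 k h)) := by
      simp only [hrepn]
      have hlim2 : 𝓕 k h = ∫ v : ℝ, (K v * Complex.exp (↑(-(2 * π * (v * h))) * Complex.I))
          * G (↑(-(2*π*v)) * Complex.I) := by
        rw [Real.fourier_real_eq_integral_exp_smul]
        congr 1
        funext v
        rw [smul_eq_mul, hkdef]
        rw [show (↑(-2 * π * v * h) * Complex.I : ℂ) = ↑(-(2 * π * (v * h))) * Complex.I by
          push_cast; ring]
        ring
      rw [hlim2]
      apply tendsto_integral_of_dominated_convergence (fun v => ‖K v‖ * CG)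
      · intro n
        apply Continuous.aestronglyMeasurable
        apply Continuous.mul
        · apply hKcont.mul
          apply Complex.continuous_exp.comp
          exact (Complex.continuous_ofReal.comp
            (continuous_const.mul (continuous_id.mul continuous_const)).neg).mul continuous_const
        · apply hG.comp_continuous
            (continuous_const.sub
              ((Complex.continuous_ofReal.comp (continuous_const.mul continuous_id)).mul
                continuous_const))
          intro v
          simp [Complex.sub_re, Complex.mul_re, (hσpos n).le]
      · exact hKint.norm.mul_const CG
      · intro n
        apply Filter.Eventually.of_forall
        intro v
        rcases le_or_gt |v| r with hv | hv
        · rw [norm_mul, norm_mul, Complex.norm_exp_ofReal_mul_I, mul_one]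
          apply mul_le_mul_of_nonneg_left _ (norm_nonneg _)
          exact hCG _ (hmemV (σs n) (hσpos n) (hσle1 n) v hv)
        · rw [hK0 v hv]
          simp only [zero_mul, norm_zero]
          positivity
      · apply Filter.Eventually.of_forall
        intro v
        apply Tendsto.const_mul
        have hmem : (↑(-(2*π*v)) * Complex.I : ℂ) ∈ {s : ℂ | 0 ≤ s.re} := by
          simp [Complex.mul_re]
        have hGc := hG _ hmem
        have hseq : Tendsto (fun n => (↑(σs n) - ↑(2 * π * v) * Complex.I : ℂ)) atTop
            (nhds (↑(-(2*π*v)) * Complex.I)) := by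
          have h1 : Tendsto (fun n => ((σs n : ℝ) : ℂ)) atTop (nhds 0) := by
            have := Complex.continuous_ofReal.continuousAt.tendsto.comp hσ0
            simpa [Function.comp_def] using this
          have h2 := h1.sub_const ((2 * π * v : ℝ) * Complex.I)
          have h3 : (0 : ℂ) - ↑(2 * π * v) * Complex.I = ↑(-(2*π*v)) * Complex.I := by
            push_cast; ring
          rw [h3] at h2
          exact h2
        have hev : ∀ n : ℕ, (↑(σs n) - ↑(2 * π * v) * Complex.I : ℂ) ∈ {s : ℂ | 0 ≤ s.re} := by
          intro n
          simp [Complex.sub_re, Complex.mul_re, (hσpos n).le]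
        have := hGc.tendsto.comp (tendsto_nhdsWithin_iff.2 ⟨hseq, Filter.Eventually.of_forall hev⟩)
        exact this
    exact tendsto_nhds_unique hDCT1 hDCT2
  rw [← hEq, Complex.norm_real]

end P5
end

section
/- Let S : [0,∞) → ℝ with S(x) + Mx non-decreasing for some M > 0, extended by 0 on (-∞,0), and let φ ∈ L¹(ℝ) satisfy ∫ φ = 1, φ(x) ≥ 0 for x ≥ 0, φ(x) ≤ 0 for x ≤ 0, and ∫ xφ(x) dx < ε. Then for all sufficiently large h (namely whenever S(h) + Mh ≥ 0), S(h) ≤ ∫_{-∞}^{∞} S(x+h) φ(x) dx + Mε. -/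
open MeasureTheory Real Filter

theorem stmt8 (S : ℝ → ℝ) (M ε : ℝ) (hM : 0 < M)
    (hS0 : ∀ x : ℝ, x < 0 → S x = 0)
    (hmono : MonotoneOn (fun x => S x + M * x) (Set.Ici 0))
    (φ : ℝ → ℝ) (hφ1 : Integrable φ)
    (hφint : (∫ x : ℝ, φ x) = 1)
    (hφpos : ∀ x : ℝ, 0 ≤ x → 0 ≤ φ x)
    (hφneg : ∀ x : ℝ, x ≤ 0 → φ x ≤ 0)
    (hxφ : Integrable (fun x : ℝ => x * φ x))
    (hxφε : (∫ x : ℝ, x * φ x) < ε)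
    (h : ℝ) (hh : 0 ≤ h) (hSh : 0 ≤ S h + M * h)
    (hint : Integrable (fun x : ℝ => S (x + h) * φ x)) :
    S h ≤ (∫ x : ℝ, S (x + h) * φ x) + M * ε := by
  have key : ∀ x : ℝ, (S h + M * h) * φ x ≤ (S (x + h) + M * (x + h)) * φ x := by
    intro x
    rcases le_or_gt 0 x with hx | hx
    · apply mul_le_mul_of_nonneg_right _ (hφpos x hx)
      exact hmono (Set.mem_Ici.2 hh) (Set.mem_Ici.2 (by linarith)) (by linarith)
    · apply mul_le_mul_of_nonpos_right _ (hφneg x hx.le)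
      rcases le_or_gt 0 (x + h) with hxh | hxh
      · exact hmono (Set.mem_Ici.2 hxh) (Set.mem_Ici.2 hh) (by linarith)
      · rw [hS0 _ hxh]; nlinarith
  have hint2 : Integrable (fun x => (S (x + h) + M * (x + h)) * φ x) := by
    have he : (fun x => (S (x + h) + M * (x + h)) * φ x)
        = fun x => S (x + h) * φ x + M * (x * φ x) + (M * h) * φ x := by
      funext x; ring
    rw [he]
    exact (hint.add (hxφ.const_mul M)).add (hφ1.const_mul (M * h))
  have hmono' : (∫ x, (S h + M * h) * φ x) ≤ ∫ x, (S (x + h) + M * (x + h)) * φ x :=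
    integral_mono (hφ1.const_mul _) hint2 key
  rw [integral_const_mul, hφint, mul_one] at hmono'
  have heq : (∫ x, (S (x + h) + M * (x + h)) * φ x)
      = (∫ x, S (x + h) * φ x) + M * (∫ x, x * φ x) + (M * h) * (∫ x, φ x) := by
    have hA : Integrable (fun x : ℝ => S (x + h) * φ x + M * (x * φ x)) :=
      hint.add (hxφ.const_mul M)
    have hfun : (∫ x, (S (x + h) + M * (x + h)) * φ x)
        = ∫ x, (S (x + h) * φ x + M * (x * φ x)) + (M * h) * φ x := by
      congr 1; funext x; ring
    rw [hfun, integral_add hA (hφ1.const_mul (M * h)),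
      integral_add hint (hxφ.const_mul M), integral_const_mul, integral_const_mul]
  rw [heq, hφint, mul_one] at hmono'
  nlinarith [hmono']
end

section
/- If the sharp Mertens relation holds, i.e. lim_{x→∞} (ψ₁(x) − log x) = −γ where ψ₁(x) = Σ_{p^k ≤ x} (log p)/p^k (sum over prime powers), then the prime number theorem holds: lim_{x→∞} ψ(x)/x = 1, where ψ(x) = Σ_{p^k ≤ x} log p. -/
open Filter ArithmeticFunction

/-- Chebyshev function `ψ(x) = ∑_{n ≤ x} Λ(n) = ∑_{p^k ≤ x} log p`. -/
noncomputable def chebyshevPsi (x : ℝ) : ℝ :=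
  ∑ n ∈ Finset.Icc 1 ⌊x⌋₊, Λ n

/-- `ψ₁(x) = ∑_{n ≤ x} Λ(n)/n = ∑_{p^k ≤ x} (log p)/p^k`. -/
noncomputable def chebyshevPsi1 (x : ℝ) : ℝ :=
  ∑ n ∈ Finset.Icc 1 ⌊x⌋₊, Λ n / n

noncomputable def psiQ (n : ℕ) : ℝ := ∑ k ∈ Finset.Icc 1 n, Λ k / k

lemma psiQ_eq (n : ℕ) : chebyshevPsi1 n = psiQ n := by
  simp [chebyshevPsi1, psiQ, Nat.floor_natCast]

/-- Abel summation identity. -/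
lemma abel_psi (N : ℕ) :
    (∑ n ∈ Finset.Icc 1 N, (Λ n : ℝ)) = N * psiQ N - ∑ n ∈ Finset.range N, psiQ n := by
  induction N with
  | zero => simp [psiQ]
  | succ N ih =>
    have hQ : psiQ (N + 1) = psiQ N + Λ (N + 1) / ((N : ℝ) + 1) := by
      rw [psiQ, psiQ, ← Finset.Ico_add_one_right_eq_Icc, Finset.sum_Ico_succ_top (by omega),
        Finset.Ico_add_one_right_eq_Icc]
      push_cast; ring
    rw [← Finset.Ico_add_one_right_eq_Icc, Finset.sum_Ico_succ_top (by omega), Finset.Ico_add_one_right_eq_Icc,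
      ih, Finset.sum_range_succ, hQ]
    have hne : ((N : ℝ) + 1) ≠ 0 := by positivity
    push_cast
    field_simp
    ring

/-- The sum `∑_{n < N} log n`. -/
noncomputable def logSum (N : ℕ) : ℝ := ∑ n ∈ Finset.range N, Real.log n

lemma logSum_le (N : ℕ) (hN : 1 ≤ N) :
    logSum N ≤ N * Real.log N - N + 1 ∧ N * Real.log N - N + 1 - Real.log N ≤ logSum N := by
  have hmono : MonotoneOn Real.log (Set.Icc ((1 : ℕ) : ℝ) ((N : ℕ) : ℝ)) := by
    intro x hx y _ hxy
    refine Real.log_le_log (lt_of_lt_of_le zero_lt_one ?_) hxy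
    exact_mod_cast hx.1
  have hint : (∫ x in ((1 : ℕ) : ℝ)..((N : ℕ) : ℝ), Real.log x)
      = N * Real.log N - N + 1 := by
    rw [show ((1 : ℕ) : ℝ) = 1 from by norm_num,
      integral_log]
    simp
  have hsum : logSum N = ∑ i ∈ Finset.Ico 1 N, Real.log i := by
    rw [logSum, Finset.range_eq_Ico, Finset.sum_eq_sum_Ico_succ_bot (by omega)]
    simp
  constructor
  · rw [hsum, ← hint]
    exact hmono.sum_le_integral_Ico hN
  · have h2 : (∫ x in ((1 : ℕ) : ℝ)..((N : ℕ) : ℝ), Real.log x) ≤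
        ∑ i ∈ Finset.Ico 1 N, Real.log ((i + 1 : ℕ) : ℝ) := hmono.integral_le_sum_Ico hN
    have h3 : ∑ i ∈ Finset.Ico 1 N, Real.log ((i + 1 : ℕ) : ℝ)
        = logSum N + Real.log N := by
      have e1 : ∑ i ∈ Finset.Ico 1 N, Real.log ((i + 1 : ℕ) : ℝ)
          = ∑ i ∈ Finset.Ico 2 (N + 1), Real.log (i : ℝ) := by
        rw [← Finset.sum_Ico_add' (fun i : ℕ => Real.log (i : ℝ)) 1 N 1]
      have e2 : ∑ i ∈ Finset.Ico 1 (N + 1), Real.log (i : ℝ)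
          = Real.log ((1 : ℕ) : ℝ) + ∑ i ∈ Finset.Ico 2 (N + 1), Real.log (i : ℝ) :=
        Finset.sum_eq_sum_Ico_succ_bot (by omega) _
      have e3 : ∑ i ∈ Finset.Ico 1 (N + 1), Real.log (i : ℝ) = logSum N + Real.log N := by
        rw [Finset.sum_Ico_succ_top hN, ← hsum]
      rw [e1]
      have : Real.log ((1 : ℕ) : ℝ) = 0 := by simp
      linarith [e2, e3]
    rw [hint, h3] at h2
    linarith

theorem stmt9
    (hmertens : Tendsto (fun x : ℝ => chebyshevPsi1 x - Real.log x) atTop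
      (nhds (-Real.eulerMascheroniConstant))) :
    Tendsto (fun x : ℝ => chebyshevPsi x / x) atTop (nhds 1) := by
  set γ := Real.eulerMascheroniConstant with hγ
  set u : ℕ → ℝ := fun n => psiQ n - Real.log n + γ with hu
  have hu0 : Tendsto u atTop (nhds 0) := by
    have h := hmertens.comp (tendsto_natCast_atTop_atTop (R := ℝ))
    have h2 : Tendsto (fun n : ℕ => psiQ n - Real.log n) atTop (nhds (-γ)) := by
      refine h.congr fun n => ?_
      simp [Function.comp, psiQ_eq]
    have := h2.add_const γ
    simpa using this
  have hcesaro : Tendsto (fun N : ℕ => ((N : ℝ))⁻¹ * ∑ i ∈ Finset.range N, u i)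
      atTop (nhds 0) := hu0.cesaro
  have hlogN : Tendsto (fun N : ℕ => Real.log N / N) atTop (nhds 0) := by
    have h := Real.isLittleO_log_id_atTop.tendsto_div_nhds_zero
    exact h.comp (tendsto_natCast_atTop_atTop (R := ℝ))
  have hNN : Tendsto (fun N : ℕ => ((N : ℝ) - 1) / N) atTop (nhds 1) := by
    have h : Tendsto (fun N : ℕ => 1 - 1 / (N : ℝ)) atTop (nhds (1 - 0)) :=
      tendsto_const_nhds.sub tendsto_one_div_atTop_nhds_zero_nat
    simp only [sub_zero] at h
    refine h.congr' ?_
    filter_upwards [eventually_ge_atTop 1] with N hN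
    have hne : (N : ℝ) ≠ 0 := by positivity
    field_simp
  have hUp : Tendsto (fun N : ℕ => ((N : ℝ) - 1 + Real.log N) / N) atTop (nhds 1) := by
    have h := hNN.add hlogN
    rw [add_zero] at h
    refine h.congr fun N => ?_
    rw [← add_div]
  have hlog : Tendsto (fun N : ℕ => Real.log N - logSum N / N) atTop (nhds 1) := by
    refine tendsto_of_tendsto_of_tendsto_of_le_of_le' hNN hUp ?_ ?_
    · filter_upwards [eventually_ge_atTop 1] with N hN
      have hNpos : (0 : ℝ) < N := by exact_mod_cast hN
      have hne : (N : ℝ) ≠ 0 := hNpos.ne'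
      have h := (logSum_le N hN).1
      have heq : Real.log N - logSum N / N = ((N : ℝ) * Real.log N - logSum N) / N := by
        rw [sub_div, mul_div_cancel_left₀ _ hne]
      rw [heq, div_le_div_iff_of_pos_right hNpos]
      linarith
    · filter_upwards [eventually_ge_atTop 1] with N hN
      have hNpos : (0 : ℝ) < N := by exact_mod_cast hN
      have hne : (N : ℝ) ≠ 0 := hNpos.ne'
      have h := (logSum_le N hN).2
      have heq : Real.log N - logSum N / N = ((N : ℝ) * Real.log N - logSum N) / N := by
        rw [sub_div, mul_div_cancel_left₀ _ hne]
      rw [heq, div_le_div_iff_of_pos_right hNpos]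
      linarith
  have key : Tendsto (fun N : ℕ => (∑ n ∈ Finset.Icc 1 N, (Λ n : ℝ)) / N) atTop (nhds 1) := by
    have hcomb : Tendsto
        (fun N : ℕ => u N - ((N : ℝ))⁻¹ * (∑ i ∈ Finset.range N, u i)
          + (Real.log N - logSum N / N)) atTop (nhds (0 - 0 + 1)) :=
      (hu0.sub hcesaro).add hlog
    rw [show (0 : ℝ) - 0 + 1 = 1 by ring] at hcomb
    refine Tendsto.congr' ?_ hcomb
    filter_upwards [eventually_ge_atTop 1] with N hN
    have hne : (N : ℝ) ≠ 0 := by positivity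
    have hsQ : ∑ n ∈ Finset.range N, psiQ n
        = (∑ i ∈ Finset.range N, u i) + logSum N - γ * N := by
      have hpt : ∀ i : ℕ, psiQ i = u i + Real.log i - γ := fun i => by
        simp only [hu]; ring
      rw [Finset.sum_congr rfl (fun i _ => hpt i), Finset.sum_sub_distrib,
        Finset.sum_add_distrib, Finset.sum_const, Finset.card_range, logSum,
        nsmul_eq_mul]
      ring
    have huN : u N = psiQ N - Real.log N + γ := rfl
    rw [huN, abel_psi, hsQ]
    field_simp
    ring
  have hfloor : Tendsto
      (fun x : ℝ => (∑ n ∈ Finset.Icc 1 ⌊x⌋₊, (Λ n : ℝ)) / (⌊x⌋₊ : ℝ))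
      atTop (nhds 1) := key.comp tendsto_nat_floor_atTop
  have hmul := hfloor.mul (tendsto_nat_floor_div_atTop (R := ℝ))
  rw [mul_one] at hmul
  refine Tendsto.congr' ?_ hmul
  filter_upwards [eventually_ge_atTop (1 : ℝ)] with x hx
  have hfl : 1 ≤ ⌊x⌋₊ := Nat.one_le_floor_iff _ |>.mpr hx
  have hne : ((⌊x⌋₊ : ℝ)) ≠ 0 := by positivity
  have hxne : x ≠ 0 := by linarith
  rw [chebyshevPsi]
  field_simp
end

section
/- The function s ↦ −ζ'(s+1)/(s·ζ(s+1)) − 1/s² + γ/s, defined for Re s > 0, extends continuously to the closed half-plane Re s ≥ 0. -/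
open Complex Filter Topology Set Function

noncomputable def Zc : ℂ → ℂ := Function.update (fun s => s * riemannZeta (s + 1)) 0 1

lemma add_one_tendsto : Tendsto (· + (1:ℂ)) (𝓝[≠] (0:ℂ)) (𝓝[≠] (1:ℂ)) := by
  have h1 : Tendsto (· + (1:ℂ)) (𝓝 (0:ℂ)) (𝓝 (1:ℂ)) := by
    simpa using (continuous_add_right (1:ℂ)).tendsto 0
  refine Tendsto.inf h1 (tendsto_principal_principal.2 ?_)
  intro x hx
  simpa using hx

lemma Zc_eventually : Zc =ᶠ[𝓝[≠] (0:ℂ)] fun s => s * riemannZeta (s + 1) := by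
  filter_upwards [self_mem_nhdsWithin] with s hs
  exact Function.update_of_ne hs _ _

lemma Zc_tendsto : Tendsto Zc (𝓝[≠] (0:ℂ)) (𝓝 1) := by
  have h : Tendsto (fun s : ℂ => s * riemannZeta (s + 1)) (𝓝[≠] (0:ℂ)) (𝓝 1) := by
    have := riemannZeta_residue_one.comp add_one_tendsto
    simpa [Function.comp_def] using this
  exact h.congr' Zc_eventually.symm

lemma Zc_zero : Zc 0 = 1 := Function.update_self _ _ _

lemma Zc_continuousAt : ContinuousAt Zc 0 := by
  rw [ContinuousAt, Zc_zero, ← nhdsNE_sup_pure]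
  exact Zc_tendsto.sup (by simpa [Zc_zero] using tendsto_pure_nhds Zc (0:ℂ))

lemma Zc_diff_ne (s : ℂ) (hs : s ≠ 0) : DifferentiableAt ℂ Zc s := by
  have h : DifferentiableAt ℂ (fun s : ℂ => s * riemannZeta (s + 1)) s := by
    refine differentiableAt_id.mul ((differentiableAt_riemannZeta ?_).comp s
      (differentiableAt_id.add_const 1))
    simpa using hs
  refine h.congr_of_eventuallyEq ?_
  filter_upwards [isOpen_compl_singleton.mem_nhds hs] with x hx
  exact Function.update_of_ne hx _ _

lemma Zc_analyticAt_zero : AnalyticAt ℂ Zc 0 := by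
  refine Complex.analyticAt_of_differentiable_on_punctured_nhds_of_continuousAt ?_ Zc_continuousAt
  filter_upwards [self_mem_nhdsWithin] with s hs
  exact Zc_diff_ne s hs

lemma Zc_diff : Differentiable ℂ Zc := by
  intro s
  rcases eq_or_ne s 0 with rfl | hs
  · exact Zc_analyticAt_zero.differentiableAt
  · exact Zc_diff_ne s hs

lemma Zc_analytic : AnalyticOnNhd ℂ Zc Set.univ := fun z _ => Zc_diff.analyticAt z

lemma deriv_Zc_zero : deriv Zc 0 = (Real.eulerMascheroniConstant : ℂ) := by
  have h1 : Tendsto (slope Zc 0) (𝓝[≠] (0:ℂ)) (𝓝 (deriv Zc 0)) :=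
    hasDerivAt_iff_tendsto_slope.mp (Zc_diff 0).hasDerivAt
  have h2 : Tendsto (slope Zc 0) (𝓝[≠] (0:ℂ)) (𝓝 (Real.eulerMascheroniConstant : ℂ)) := by
    have h3 : Tendsto (fun s : ℂ => riemannZeta (s + 1) - 1 / s) (𝓝[≠] (0:ℂ))
        (𝓝 (Real.eulerMascheroniConstant : ℂ)) := by
      have := tendsto_riemannZeta_sub_one_div.comp add_one_tendsto
      simpa [Function.comp_def] using this
    refine h3.congr' ?_
    filter_upwards [self_mem_nhdsWithin] with s hs
    rw [slope_def_field, Zc_zero]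
    rw [show Zc s = s * riemannZeta (s + 1) from Function.update_of_ne hs _ _]
    have hs' : s ≠ 0 := hs
    rw [sub_zero, sub_div, mul_div_cancel_left₀ _ hs']
  exact tendsto_nhds_unique h1 h2

noncomputable def hc : ℂ → ℂ := fun s => (Real.eulerMascheroniConstant : ℂ) * Zc s - deriv Zc s

lemma hc_diff : Differentiable ℂ hc := by
  refine (Zc_diff.const_mul _).sub ?_
  intro z
  exact ((Zc_analytic.deriv) z trivial).differentiableAt

lemma hc_zero : hc 0 = 0 := by
  simp [hc, Zc_zero, deriv_Zc_zero]

noncomputable def Nc : ℂ → ℂ := Function.update (slope hc 0) 0 (deriv hc 0)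

lemma Nc_continuousAt : ContinuousAt Nc 0 := by
  have h1 : Tendsto (slope hc 0) (𝓝[≠] (0:ℂ)) (𝓝 (deriv hc 0)) :=
    hasDerivAt_iff_tendsto_slope.mp (hc_diff 0).hasDerivAt
  have h2 : Tendsto Nc (𝓝[≠] (0:ℂ)) (𝓝 (deriv hc 0)) := by
    refine h1.congr' ?_
    filter_upwards [self_mem_nhdsWithin] with s hs
    exact (Function.update_of_ne hs _ _).symm
  have h0 : Nc 0 = deriv hc 0 := Function.update_self _ _ _
  rw [ContinuousAt, h0, ← nhdsNE_sup_pure]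
  refine h2.sup ?_
  simpa [h0] using tendsto_pure_nhds Nc (0:ℂ)

lemma Nc_eq (s : ℂ) (hs : s ≠ 0) : Nc s = hc s / s := by
  rw [Nc, Function.update_of_ne hs, slope_def_field, hc_zero]
  field_simp
  ring

lemma Nc_continuousAt_ne (s : ℂ) (hs : s ≠ 0) : ContinuousAt Nc s := by
  have h : ContinuousAt (fun z => hc z / z) s :=
    (hc_diff.continuous.continuousAt).div continuousAt_id hs
  refine h.congr ?_
  filter_upwards [isOpen_compl_singleton.mem_nhds hs] with x hx
  exact (Nc_eq x hx).symm

lemma Zc_ne_zero (s : ℂ) (hs : 0 ≤ s.re) : Zc s ≠ 0 := by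
  rcases eq_or_ne s 0 with rfl | h
  · simp [Zc_zero]
  · rw [Zc, Function.update_of_ne h]
    refine mul_ne_zero h (riemannZeta_ne_zero_of_one_le_re ?_)
    simpa using hs

theorem stmt12 :
    ∃ G : ℂ → ℂ, ContinuousOn G {s : ℂ | 0 ≤ s.re} ∧
      ∀ s : ℂ, 0 < s.re →
        G s = -(deriv riemannZeta (s + 1)) / (s * riemannZeta (s + 1))
          - 1 / s ^ 2 + (Real.eulerMascheroniConstant : ℂ) / s := by
  refine ⟨fun s => Nc s / Zc s, ?_, ?_⟩
  · intro s hs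
    have hN : ContinuousAt Nc s := by
      rcases eq_or_ne s 0 with rfl | h
      · exact Nc_continuousAt
      · exact Nc_continuousAt_ne s h
    exact ((hN.div (Zc_diff.continuous.continuousAt) (Zc_ne_zero s hs))).continuousWithinAt
  · intro s hs
    have hs0 : s ≠ 0 := by
      intro h; rw [h] at hs; simp at hs
    have hs1 : s + 1 ≠ 1 := by simpa using hs0
    have hz : riemannZeta (s + 1) ≠ 0 := by
      refine riemannZeta_ne_zero_of_one_le_re ?_
      simp only [Complex.add_re, Complex.one_re]
      linarith
    have hZeq : Zc s = s * riemannZeta (s + 1) := Function.update_of_ne hs0 _ _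
    have hdZ : deriv Zc s = riemannZeta (s + 1) + s * deriv riemannZeta (s + 1) := by
      have hd : HasDerivAt (fun z : ℂ => z * riemannZeta (z + 1))
          (1 * riemannZeta (s + 1) + s * (deriv riemannZeta (s + 1) * 1)) s := by
        refine (hasDerivAt_id s).mul ?_
        exact ((differentiableAt_riemannZeta hs1).hasDerivAt).comp s
          ((hasDerivAt_id s).add_const 1)
      have heq : Zc =ᶠ[𝓝 s] fun z : ℂ => z * riemannZeta (z + 1) := by
        filter_upwards [isOpen_compl_singleton.mem_nhds hs0] with x hx
        exact Function.update_of_ne hx _ _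
      rw [heq.deriv_eq, hd.deriv]
      ring
    show Nc s / Zc s = _
    rw [Nc_eq s hs0, hZeq, hc, hdZ, hZeq]
    field_simp
    ring
end
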